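/- arXiv:1610.05964 — 6 statements merged into one kernel-verified Lean document; each statement's English description precedes it below -/
import Mathlib

section
/- Let I be a countable index set, z : I → ℝ^d a family of points, and L : I → [1,∞) a family of weights, and suppose there is a constant c₁ > 0 such that |z_i − z_j| > c₁/√(L_i·L_j) whenever z_i ≠ z_j. Then a point ξ ∈ ℝ^d is singular (for this family, in the parabolic sense) if and only if ξ = z_i for some i ∈ I. -/
/-- Under the parabolic separation hypothesis
`dist (z i) (z j) > c₁ / √(L i * L j)` for distinct points, a point `ξ ∈ ℝ^d` is
singular in the parabolic sense iff it belongs to the family `z`. -/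
theorem singular_parabolic_iff_mem_orbit {d : ℕ} {I : Type*} [Countable I]
    (z : I → EuclideanSpace ℝ (Fin d)) (L : I → ℝ) (hL : ∀ i, 1 ≤ L i)
    (c₁ : ℝ) (hc₁ : 0 < c₁)
    (hsep : ∀ i j, z i ≠ z j → c₁ / Real.sqrt (L i * L j) < dist (z i) (z j))
    (ξ : EuclideanSpace ℝ (Fin d)) :
    (∀ ε : ℝ, 0 < ε → ∃ N₀ : ℝ, 1 < N₀ ∧ ∀ N : ℝ, N₀ ≤ N →
        ∃ i : I, dist ξ (z i) < ε / Real.sqrt (L i * N) ∧ L i < N)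
      ↔ ∃ i : I, ξ = z i := by
  constructor
  · intro h
    set ε := c₁ / 4 with hε
    have hεpos : 0 < ε := by positivity
    obtain ⟨N₀, hN₀1, hN⟩ := h ε hεpos
    have hN₀0 : (0:ℝ) < N₀ := lt_trans one_pos hN₀1
    choose F hd hLF using hN
    -- dichotomy: if N₀ ≤ N ≤ M ≤ 9N then z (F N) = z (F M)
    have key : ∀ N M (hN' : N₀ ≤ N) (hM' : N₀ ≤ M), N ≤ M → M ≤ 9 * N →
        z (F N hN') = z (F M hM') := by
      intro N M hN' hM' hNM hM9
      by_contra hne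
      set i := F N hN'
      set j := F M hM'
      have hLi : 1 ≤ L i := hL i
      have hLj : 1 ≤ L j := hL j
      have hN0 : (0:ℝ) < N := lt_of_lt_of_le hN₀0 hN'
      have hM0 : (0:ℝ) < M := lt_of_lt_of_le hN₀0 hM'
      have hab : (0:ℝ) < L i * L j := by positivity
      have habs : (0:ℝ) < Real.sqrt (L i * L j) := Real.sqrt_pos.mpr hab
      have h1 : ε / Real.sqrt (L i * N) ≤ 3 * ε / Real.sqrt (L i * L j) := by
        have h9 : Real.sqrt (L i * L j) ≤ 3 * Real.sqrt (L i * N) := by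
          have e3 : Real.sqrt (9 * (L i * N)) = 3 * Real.sqrt (L i * N) := by
            rw [Real.sqrt_mul (by norm_num : (0:ℝ) ≤ 9)]
            congr 1
            rw [show (9:ℝ) = 3 ^ 2 by norm_num]
            exact Real.sqrt_sq (by norm_num : (0:ℝ) ≤ 3)
          rw [← e3]
          apply Real.sqrt_le_sqrt
          have hLjM : L j ≤ 9 * N := le_trans (le_of_lt (hLF M hM')) hM9
          nlinarith
        calc ε / Real.sqrt (L i * N) = 3 * ε / (3 * Real.sqrt (L i * N)) := by
              rw [mul_div_mul_left _ _ (by norm_num : (3:ℝ) ≠ 0)]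
          _ ≤ 3 * ε / Real.sqrt (L i * L j) :=
              div_le_div_of_nonneg_left (by positivity) habs h9
      have h2 : ε / Real.sqrt (L j * M) ≤ ε / Real.sqrt (L i * L j) := by
        apply div_le_div_of_nonneg_left (le_of_lt hεpos) habs
        apply Real.sqrt_le_sqrt
        have : L i < M := lt_of_lt_of_le (hLF N hN') hNM
        nlinarith
      have hdij : dist (z i) (z j) ≤ dist ξ (z i) + dist ξ (z j) :=
        dist_triangle_left _ _ _
      have a1 : dist ξ (z i) < 3 * ε / Real.sqrt (L i * L j) :=
        lt_of_lt_of_le (hd N hN') h1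
      have a2 : dist ξ (z j) < ε / Real.sqrt (L i * L j) :=
        lt_of_lt_of_le (hd M hM') h2
      have hsum : 3 * ε / Real.sqrt (L i * L j) + ε / Real.sqrt (L i * L j)
          = c₁ / Real.sqrt (L i * L j) := by
        rw [← add_div, hε]; ring_nf
      have := hsep i j hne
      linarith
    -- the approximating point is constant in N
    have const : ∀ N (hN' : N₀ ≤ N), z (F N hN') = z (F N₀ le_rfl) := by
      have step : ∀ k : ℕ, ∀ N (hN' : N₀ ≤ N), N ≤ 9 ^ k * N₀ →
          z (F N hN') = z (F N₀ le_rfl) := by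
        intro k
        induction k with
        | zero =>
          intro N hN' hup
          have : N = N₀ := le_antisymm (by simpa using hup) hN'
          subst this; rfl
        | succ k ih =>
          intro N hN' hup
          by_cases hc : N ≤ 9 ^ k * N₀
          · exact ih N hN' hc
          · push_neg at hc
            set M := max N₀ (N / 9) with hM
            have hN0 : (0:ℝ) < N := lt_of_lt_of_le hN₀0 hN'
            have hMN₀ : N₀ ≤ M := le_max_left _ _
            have hpow1 : (1:ℝ) ≤ 9 ^ k := one_le_pow₀ (by norm_num)
            have hMle : M ≤ 9 ^ k * N₀ := by
              apply max_le
              · nlinarith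
              · rw [div_le_iff₀ (by norm_num : (0:ℝ) < 9)]
                calc N ≤ 9 ^ (k + 1) * N₀ := hup
                  _ = 9 ^ k * N₀ * 9 := by ring
            have hMN : M ≤ N := max_le hN' (by linarith)
            have hN9M : N ≤ 9 * M := by
              have : N / 9 ≤ M := le_max_right _ _
              linarith
            calc z (F N hN') = z (F M hMN₀) := (key M N hMN₀ hN' hMN hN9M).symm
              _ = z (F N₀ le_rfl) := ih M hMN₀ hMle
      intro N hN'
      obtain ⟨k, hk⟩ := pow_unbounded_of_one_lt (R := ℝ) N (by norm_num : (1:ℝ) < 9)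
      refine step k N hN' (le_trans (le_of_lt hk) ?_)
      exact le_mul_of_one_le_right (by positivity) (le_of_lt hN₀1)
    -- conclude ξ = z (F N₀)
    refine ⟨F N₀ le_rfl, ?_⟩
    by_contra hne
    have hδ : 0 < dist ξ (z (F N₀ le_rfl)) := dist_pos.mpr hne
    set δ := dist ξ (z (F N₀ le_rfl)) with hδdef
    set N := max N₀ ((ε / δ) ^ 2 + 1) with hNdef
    have hNN₀ : N₀ ≤ N := le_max_left _ _
    have hNb : (ε / δ) ^ 2 < N := lt_of_lt_of_le (lt_add_one _) (le_max_right _ _)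
    have hN0 : (0:ℝ) < N := lt_of_lt_of_le hN₀0 hNN₀
    have hsN : (0:ℝ) < Real.sqrt N := Real.sqrt_pos.mpr hN0
    have hrec : δ < ε / Real.sqrt (L (F N hNN₀) * N) := by
      rw [hδdef, ← const N hNN₀]; exact hd N hNN₀
    have hb : ε / Real.sqrt (L (F N hNN₀) * N) ≤ ε / Real.sqrt N := by
      apply div_le_div_of_nonneg_left (le_of_lt hεpos) hsN
      apply Real.sqrt_le_sqrt
      nlinarith [hL (F N hNN₀)]
    have hsqrt : ε / δ < Real.sqrt N := by
      have h' : Real.sqrt ((ε / δ) ^ 2) < Real.sqrt N :=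
        Real.sqrt_lt_sqrt (by positivity) hNb
      rwa [Real.sqrt_sq (by positivity)] at h'
    have hfin : ε / Real.sqrt N < δ := by
      rw [div_lt_iff₀ hsN]
      rw [div_lt_iff₀ hδ] at hsqrt
      nlinarith
    linarith [lt_of_lt_of_le hrec hb]
  · rintro ⟨i, rfl⟩
    intro ε hε
    refine ⟨L i + 1, by linarith [hL i], fun N hN => ⟨i, ?_, by linarith⟩⟩
    rw [dist_self]
    have h1 : (0:ℝ) < L i * N := by nlinarith [hL i]
    positivity
end

section
/- Let I be a countable index set, z : I → ℝ^d a family of points, and L : I → [1,∞) a family of weights, and suppose there is a constant c₁ > 0 such that |z_i − z_j| > c₁/max(L_i, L_j) whenever z_i ≠ z_j. Then a point ξ ∈ ℝ^d is singular (for this family, in the hyperbolic sense) if and only if ξ = z_i for some i ∈ I. -/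
/-- Under the hyperbolic separation hypothesis
`dist (z i) (z j) > c₁ / max (L i) (L j)` for distinct points, a point `ξ ∈ ℝ^d` is
singular in the hyperbolic sense iff it belongs to the family `z`. -/
theorem singular_hyperbolic_iff_mem_orbit {d : ℕ} {I : Type*} [Countable I]
    (z : I → EuclideanSpace ℝ (Fin d)) (L : I → ℝ) (hL : ∀ i, 1 ≤ L i)
    (c₁ : ℝ) (hc₁ : 0 < c₁)
    (hsep : ∀ i j, z i ≠ z j → c₁ / max (L i) (L j) < dist (z i) (z j))
    (ξ : EuclideanSpace ℝ (Fin d)) :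
    (∀ ε : ℝ, 0 < ε → ∃ N₀ : ℝ, 1 < N₀ ∧ ∀ N : ℝ, N₀ ≤ N →
        ∃ i : I, dist ξ (z i) < ε / N ∧ L i < N)
      ↔ ∃ i : I, ξ = z i := by
  constructor
  · intro h
    obtain ⟨N₀, hN₀, H⟩ := h (c₁ / 4) (by positivity)
    have hN₀pos : 0 < N₀ := lt_trans one_pos hN₀
    obtain ⟨i₀, hd₀, hL₀⟩ := H N₀ le_rfl
    have claim : ∀ k : ℕ, ∃ j, z j = z i₀ ∧
        dist ξ (z j) < c₁ / 4 / ((3/2 : ℝ) ^ k * N₀) ∧ L j < (3/2 : ℝ) ^ k * N₀ := by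
      intro k
      induction k with
      | zero => exact ⟨i₀, rfl, by simpa using hd₀, by simpa using hL₀⟩
      | succ k ih =>
        obtain ⟨j, hj, hdj, hLj⟩ := ih
        set m : ℝ := (3/2 : ℝ) ^ k * N₀ with hm
        have hpow : (1 : ℝ) ≤ (3/2 : ℝ) ^ k := one_le_pow₀ (by norm_num)
        have hmpos : 0 < m := by positivity
        have hmN : N₀ ≤ m := by nlinarith
        have hm' : (3/2 : ℝ) ^ (k+1) * N₀ = 3/2 * m := by rw [hm, pow_succ]; ring
        obtain ⟨j', hdj', hLj'⟩ := H ((3/2 : ℝ) ^ (k+1) * N₀) (by rw [hm']; nlinarith)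
        rw [hm'] at hdj' hLj'
        have heq : z j' = z j := by
          by_contra hne
          have hs := hsep j j' (fun hh => hne hh.symm)
          have htri : dist (z j) (z j') ≤ dist ξ (z j) + dist ξ (z j') :=
            dist_triangle_left _ _ _
          have hmax : max (L j) (L j') < 3/2 * m :=
            max_lt (by nlinarith) hLj'
          have hmaxpos : 0 < max (L j) (L j') :=
            lt_of_lt_of_le zero_lt_one ((hL j).trans (le_max_left _ _))
          have h1 : c₁ / (3/2 * m) < c₁ / max (L j) (L j') :=
            div_lt_div_of_pos_left hc₁ hmaxpos hmax
          have h2 : c₁ / (3/2 * m) < c₁ / 4 / m + c₁ / 4 / (3/2 * m) := by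
            linarith
          have e1 : c₁ / (3/2 * m) = 2/3 * (c₁ / m) := by field_simp
          have e2 : c₁ / 4 / m = 1/4 * (c₁ / m) := by ring
          have e3 : c₁ / 4 / (3/2 * m) = 1/6 * (c₁ / m) := by field_simp; ring
          have hX : 0 < c₁ / m := by positivity
          rw [e1, e2, e3] at h2
          linarith
        refine ⟨j', heq.trans hj, by rw [hm']; exact hdj', by rw [hm']; exact hLj'⟩
    refine ⟨i₀, ?_⟩
    by_contra hne
    have hD : 0 < dist ξ (z i₀) := dist_pos.2 hne
    obtain ⟨k, hk⟩ := pow_unbounded_of_one_lt (c₁ / (4 * N₀ * dist ξ (z i₀)))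
      (by norm_num : (1 : ℝ) < 3/2)
    obtain ⟨j, hj, hdj, -⟩ := claim k
    rw [hj] at hdj
    have hpow : (1 : ℝ) ≤ (3/2 : ℝ) ^ k := one_le_pow₀ (by norm_num)
    have hpos : 0 < (3/2 : ℝ) ^ k * N₀ := by positivity
    have hk' : c₁ < 4 * N₀ * dist ξ (z i₀) * (3/2 : ℝ) ^ k := by
      rw [div_lt_iff₀ (by positivity)] at hk
      linarith
    have : c₁ / 4 / ((3/2 : ℝ) ^ k * N₀) < dist ξ (z i₀) := by
      rw [div_div, div_lt_iff₀ (by positivity)]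
      nlinarith
    linarith
  · rintro ⟨i, rfl⟩
    intro ε hε
    refine ⟨L i + 2, by linarith [hL i], fun N hN => ⟨i, ?_, by linarith [hL i]⟩⟩
    have hNpos : 0 < N := by linarith [hL i]
    simp only [dist_self]
    positivity
end

section
/- Let K ⊆ ℝ^d be compact, let α > 0, and let μ be a Borel probability measure on ℝ^d with support contained in K which is weakly absolutely α-decaying. Let I be a countable index set, z : I → ℝ^d an injective family of points, L : I → [1,∞) weights, and suppose there is c₁ > 0 such that |z_i − z_j| > c₁/max(L_i, L_j) for all i ≠ j. Let ψ : [1,∞) → [0,∞) be a decreasing function with ∑_{r=1}^∞ r^{α−1} ψ(r)^α < ∞. Then μ({ξ ∈ ℝ^d : |ξ − z_i| < ψ(L_i) for infinitely many i ∈ I}) = 0. -/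
open Metric MeasureTheory

open Filter

set_option maxHeartbeats 1000000


lemma aux_finite_of_separated {X : Type*} [MetricSpace X] [ProperSpace X] {s : Set X} {δ : ℝ}
    (hδ : 0 < δ) (hb : Bornology.IsBounded s)
    (hsep : s.Pairwise fun x y => δ < dist x y) : s.Finite := by
  have htb : TotallyBounded s :=
    (hb.isCompact_closure.totallyBounded).subset subset_closure
  obtain ⟨t, htf, hst⟩ := Metric.totallyBounded_iff.1 htb (δ / 2) (by linarith)
  have hch : ∀ x ∈ s, ∃ y ∈ t, x ∈ ball y (δ / 2) := by
    intro x hx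
    simpa using hst hx
  choose! g hg1 hg2 using hch
  refine Set.Finite.of_finite_image (f := g) (htf.subset ?_) ?_
  · rintro _ ⟨x, hx, rfl⟩; exact hg1 x hx
  · intro x hx y hy hxy
    by_contra hne
    have h1 := hg2 x hx
    have h2 := hg2 y hy
    rw [mem_ball] at h1 h2
    have hlt : dist x y < δ := by
      calc dist x y ≤ dist x (g x) + dist (g x) y := dist_triangle _ _ _
        _ < δ / 2 + δ / 2 := add_lt_add h1 (by rw [hxy, dist_comm]; exact h2)
        _ = δ := by ring
    have := hsep hx hy hne
    linarith

lemma aux_summable_condensed {α : ℝ} (hα : 0 < α) {ψ : ℝ → ℝ}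
    (hψ0 : ∀ r : ℝ, 1 ≤ r → 0 ≤ ψ r)
    (hψmono : ∀ r s : ℝ, 1 ≤ r → r ≤ s → ψ s ≤ ψ r)
    (hsum : Summable (fun r : ℕ => ((r : ℝ) + 1) ^ (α - 1) * ψ ((r : ℝ) + 1) ^ α)) :
    Summable (fun n : ℕ => ((2:ℝ) ^ n * ψ ((2:ℝ) ^ n)) ^ α) := by
  set f : ℕ → ℝ := fun r => ((r : ℝ) + 1) ^ (α - 1) * ψ ((r : ℝ) + 1) ^ α with hfdef
  have hf0 : ∀ r, 0 ≤ f r := by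
    intro r
    exact mul_nonneg (Real.rpow_nonneg (by positivity) _)
      (Real.rpow_nonneg (hψ0 _ (by linarith [Nat.cast_nonneg (α := ℝ) r])) _)
  set b : ℕ → ℝ := fun n => ((2:ℝ) ^ n * ψ ((2:ℝ) ^ n)) ^ α with hbdef
  have hψ2 : ∀ n : ℕ, 0 ≤ ψ ((2:ℝ) ^ n) := fun n => hψ0 _ (one_le_pow₀ one_le_two)
  have hb0 : ∀ n, 0 ≤ b n := fun n => Real.rpow_nonneg (mul_nonneg (by positivity) (hψ2 n)) _
  have hkey : ∀ n : ℕ, b (n + 1) ≤ 2 ^ (1 + α) * ∑ r ∈ Finset.Ico (2 ^ n) (2 ^ (n + 1)), f r := by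
    intro n
    set x : ℝ := (2:ℝ) ^ n with hxdef
    have hx1 : 1 ≤ x := one_le_pow₀ one_le_two
    have hx0 : 0 < x := by linarith
    have hψx0 : 0 ≤ ψ (2 * x) := hψ0 _ (by linarith)
    have hterm : ∀ r ∈ Finset.Ico (2 ^ n) (2 ^ (n + 1)),
        x ^ (α - 1) / 2 * ψ (2 * x) ^ α ≤ f r := by
      intro r hr
      rw [Finset.mem_Ico] at hr
      have h1 : x ≤ (r : ℝ) + 1 := by
        have h := Nat.cast_le (α := ℝ).2 hr.1
        push_cast at h
        rw [hxdef]; linarith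
      have h2 : (r : ℝ) + 1 ≤ 2 * x := by
        have h := Nat.cast_le (α := ℝ).2 (Nat.succ_le_of_lt hr.2)
        push_cast [pow_succ] at h
        rw [hxdef]; linarith
      have hψle : ψ (2 * x) ≤ ψ ((r : ℝ) + 1) := hψmono _ _ (by linarith) h2
      have hψr0 : 0 ≤ ψ ((r : ℝ) + 1) := hψ0 _ (by linarith)
      have hpow : x ^ (α - 1) / 2 ≤ ((r : ℝ) + 1) ^ (α - 1) := by
        have hx' : 0 ≤ x ^ (α - 1) := Real.rpow_nonneg hx0.le _
        rcases le_total 1 α with hα1 | hα1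
        · have h3 : x ^ (α - 1) ≤ ((r : ℝ) + 1) ^ (α - 1) :=
            Real.rpow_le_rpow hx0.le h1 (by linarith)
          linarith
        · have h3 : ((2:ℝ) * x) ^ (α - 1) ≤ ((r : ℝ) + 1) ^ (α - 1) :=
            Real.rpow_le_rpow_of_nonpos (by linarith) h2 (by linarith)
          have h4 : ((2:ℝ) * x) ^ (α - 1) = 2 ^ (α - 1) * x ^ (α - 1) :=
            Real.mul_rpow (by norm_num) hx0.le
          have h5 : (1 / 2 : ℝ) ≤ (2:ℝ) ^ (α - 1) := by
            rw [show (1 / 2 : ℝ) = (2:ℝ) ^ (-1 : ℝ) by rw [Real.rpow_neg_one]; norm_num]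
            exact Real.rpow_le_rpow_of_exponent_le one_le_two (by linarith)
          have h7 : (1 / 2 : ℝ) * x ^ (α - 1) ≤ 2 ^ (α - 1) * x ^ (α - 1) :=
            mul_le_mul_of_nonneg_right h5 hx'
          linarith
      calc x ^ (α - 1) / 2 * ψ (2 * x) ^ α
          ≤ ((r : ℝ) + 1) ^ (α - 1) * ψ ((r : ℝ) + 1) ^ α :=
            mul_le_mul hpow (Real.rpow_le_rpow hψx0 hψle hα.le)
              (Real.rpow_nonneg hψx0 _) (Real.rpow_nonneg (by positivity) _)
        _ = f r := rfl
    have hcardnat : (Finset.Ico (2 ^ n) (2 ^ (n + 1))).card = 2 ^ n := by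
      rw [Nat.card_Ico, pow_succ]; omega
    have hsum_lb : x * (x ^ (α - 1) / 2 * ψ (2 * x) ^ α)
        ≤ ∑ r ∈ Finset.Ico (2 ^ n) (2 ^ (n + 1)), f r := by
      have h := Finset.card_nsmul_le_sum (Finset.Ico (2 ^ n) (2 ^ (n + 1)))
        f (x ^ (α - 1) / 2 * ψ (2 * x) ^ α) hterm
      rw [hcardnat, nsmul_eq_mul] at h
      have : ((2 ^ n : ℕ) : ℝ) = x := by push_cast [hxdef]; ring
      rwa [this] at h
    have e1 : x * x ^ (α - 1) = x ^ α := by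
      have h := (Real.rpow_add hx0 1 (α - 1)).symm
      rw [Real.rpow_one] at h
      rw [h]; norm_num
    have e2 : (2:ℝ) ^ (1 + α) = 2 * 2 ^ α := by
      rw [Real.rpow_add two_pos, Real.rpow_one]
    have hbexp : b (n + 1) = 2 ^ (1 + α) * (x * (x ^ (α - 1) / 2 * ψ (2 * x) ^ α)) := by
      have h2x : (2:ℝ) ^ (n + 1) = 2 * x := by rw [pow_succ, hxdef]; ring
      have e3 : ((2:ℝ) * x * ψ (2 * x)) ^ α = 2 ^ α * x ^ α * ψ (2 * x) ^ α := by
        rw [Real.mul_rpow (by positivity) hψx0, Real.mul_rpow (by norm_num) hx0.le]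
      have e4 : x * (x ^ (α - 1) / 2 * ψ (2 * x) ^ α)
          = x * x ^ (α - 1) * ψ (2 * x) ^ α / 2 := by ring
      calc b (n + 1) = ((2:ℝ) * x * ψ (2 * x)) ^ α := by
            simp only [hbdef]; rw [h2x]
        _ = 2 ^ α * x ^ α * ψ (2 * x) ^ α := e3
        _ = 2 ^ (1 + α) * (x * (x ^ (α - 1) / 2 * ψ (2 * x) ^ α)) := by
            rw [e4, e1, e2]; ring
    rw [hbexp]
    exact mul_le_mul_of_nonneg_left hsum_lb (by positivity)
  have hblocks : ∀ M : ℕ, ∑ n ∈ Finset.range M, (∑ r ∈ Finset.Ico (2 ^ n) (2 ^ (n + 1)), f r)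
      = ∑ r ∈ Finset.Ico 1 (2 ^ M), f r := by
    intro M
    induction M with
    | zero => simp
    | succ M ih =>
      rw [Finset.sum_range_succ, ih]
      exact Finset.sum_Ico_consecutive _ (Nat.one_le_two_pow)
        (Nat.pow_le_pow_right (by norm_num) (Nat.le_succ M))
  have hc2 : (0:ℝ) ≤ 2 ^ (1 + α) := (Real.rpow_pos_of_pos two_pos _).le
  have hpartial : ∀ M : ℕ, ∑ m ∈ Finset.range M, b m ≤ b 0 + 2 ^ (1 + α) * (∑' r, f r) := by
    intro M
    have htsum0 : 0 ≤ ∑' r, f r := tsum_nonneg hf0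
    cases M with
    | zero =>
      simp only [Finset.range_zero, Finset.sum_empty]
      have := hb0 0
      nlinarith
    | succ M =>
      rw [Finset.sum_range_succ']
      have h1 : ∑ i ∈ Finset.range M, b (i + 1)
          ≤ 2 ^ (1 + α) * ∑ r ∈ Finset.Ico 1 (2 ^ M), f r := by
        calc ∑ i ∈ Finset.range M, b (i + 1)
            ≤ ∑ i ∈ Finset.range M, 2 ^ (1 + α) * ∑ r ∈ Finset.Ico (2 ^ i) (2 ^ (i + 1)), f r :=
              Finset.sum_le_sum fun i _ => hkey i
          _ = 2 ^ (1 + α) * ∑ i ∈ Finset.range M, ∑ r ∈ Finset.Ico (2 ^ i) (2 ^ (i + 1)), f r :=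
              (Finset.mul_sum _ _ _).symm
          _ = _ := by rw [hblocks M]
      have h2 : ∑ r ∈ Finset.Ico 1 (2 ^ M), f r ≤ ∑' r, f r :=
        hsum.sum_le_tsum _ (fun r _ => hf0 r)
      have h3 := mul_le_mul_of_nonneg_left h2 hc2
      linarith
  exact summable_of_sum_range_le hb0 hpartial


/-- convergence Borel–Cantelli statement for weakly absolutely
α-decaying measures (abstract form of the paper's Theorem 2). -/
theorem measure_limsup_zero_of_weakly_decaying {d : ℕ} {I : Type*} [Countable I]
    (K : Set (EuclideanSpace ℝ (Fin d))) (hK : IsCompact K)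
    (α : ℝ) (hα : 0 < α)
    (μ : Measure (EuclideanSpace ℝ (Fin d))) [IsProbabilityMeasure μ]
    (hsupp : μ Kᶜ = 0)
    (hdecay : ∃ C > (0:ℝ), ∃ r₀ > (0:ℝ), ∀ ε > (0:ℝ), ∀ x ∈ K, ∀ r : ℝ, 0 < r → r < r₀ →
      μ (closedBall x (ε * r)) ≤ ENNReal.ofReal (C * ε ^ α) * μ (closedBall x r))
    (z : I → EuclideanSpace ℝ (Fin d)) (hz : Function.Injective z)
    (L : I → ℝ) (hL : ∀ i, 1 ≤ L i)
    (c₁ : ℝ) (hc₁ : 0 < c₁)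
    (hsep : ∀ i j, i ≠ j → c₁ / max (L i) (L j) < dist (z i) (z j))
    (ψ : ℝ → ℝ) (hψ0 : ∀ r : ℝ, 1 ≤ r → 0 ≤ ψ r)
    (hψmono : ∀ r s : ℝ, 1 ≤ r → r ≤ s → ψ s ≤ ψ r)
    (hsum : Summable (fun r : ℕ => ((r : ℝ) + 1) ^ (α - 1) * ψ ((r : ℝ) + 1) ^ α)) :
    μ {ξ : EuclideanSpace ℝ (Fin d) | {i : I | dist ξ (z i) < ψ (L i)}.Infinite} = 0 := by
  classical
  obtain ⟨C, hC, r₀, hr₀, hdec⟩ := hdecay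
  set B : I → Set (EuclideanSpace ℝ (Fin d)) := fun i => closedBall (z i) (ψ (L i)) with hBdef
  have hψL : ∀ i, 0 ≤ ψ (L i) := fun i => hψ0 _ (hL i)
  have hψ2 : ∀ n : ℕ, 0 ≤ ψ ((2:ℝ) ^ n) := fun n => hψ0 _ (one_le_pow₀ one_le_two)
  -- singletons are null
  have hatom : ∀ x : EuclideanSpace ℝ (Fin d), μ {x} = 0 := by
    intro x
    by_cases hx : x ∈ K
    · have key : ∀ ε : ℝ, 0 < ε → μ {x} ≤ ENNReal.ofReal (C * ε ^ α) := by
        intro ε hε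
        have h1 : ({x} : Set (EuclideanSpace ℝ (Fin d))) ⊆ closedBall x (ε * (r₀ / 2)) := by
          rw [Set.singleton_subset_iff]
          exact mem_closedBall_self (by positivity)
        calc μ {x} ≤ μ (closedBall x (ε * (r₀ / 2))) := measure_mono h1
          _ ≤ ENNReal.ofReal (C * ε ^ α) * μ (closedBall x (r₀ / 2)) :=
            hdec ε hε x hx _ (by positivity) (by linarith)
          _ ≤ ENNReal.ofReal (C * ε ^ α) * 1 := mul_le_mul_right prob_le_one _
          _ = ENNReal.ofReal (C * ε ^ α) := mul_one _
      have hlim : Tendsto (fun k : ℕ => ENNReal.ofReal (C * ((k : ℝ) + 1)⁻¹ ^ α))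
          atTop (nhds 0) := by
        rw [show (0 : ENNReal) = ENNReal.ofReal (C * 0) by simp]
        apply ENNReal.tendsto_ofReal
        apply Tendsto.const_mul
        have h1 : Tendsto (fun k : ℕ => (k : ℝ) + 1) atTop atTop :=
          tendsto_atTop_add_const_right atTop 1 tendsto_natCast_atTop_atTop
        have h2 := (tendsto_rpow_neg_atTop hα).comp h1
        refine h2.congr fun k => ?_
        have hk : (0:ℝ) < (k : ℝ) + 1 := by positivity
        simp only [Function.comp_apply]
        rw [Real.rpow_neg hk.le, ← Real.inv_rpow hk.le]
      have hle := ge_of_tendsto' hlim fun k => key _ (by positivity)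
      exact le_antisymm hle zero_le
    · exact measure_mono_null (by simpa using hx) hsupp
  -- condensed summability
  have hb : Summable (fun n : ℕ => ((2:ℝ) ^ n * ψ ((2:ℝ) ^ n)) ^ α) :=
    aux_summable_condensed hα hψ0 hψmono hsum
  have hb0 : ∀ n : ℕ, 0 ≤ ((2:ℝ) ^ n * ψ ((2:ℝ) ^ n)) ^ α :=
    fun n => Real.rpow_nonneg (mul_nonneg (by positivity) (hψ2 n)) _
  -- eventual smallness
  obtain ⟨N₁, hN₁⟩ : ∃ N₁ : ℕ, ∀ n ≥ N₁, (2:ℝ) ^ n * ψ ((2:ℝ) ^ n) < c₁ / 16 := by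
    have h0 : (0:ℝ) < (c₁ / 16) ^ α := Real.rpow_pos_of_pos (by positivity) _
    have hev := hb.tendsto_atTop_zero.eventually_lt_const h0
    obtain ⟨N₁, hN₁⟩ := eventually_atTop.1 hev
    refine ⟨N₁, fun n hn => ?_⟩
    by_contra hcon
    push_neg at hcon
    have : (c₁ / 16) ^ α ≤ ((2:ℝ) ^ n * ψ ((2:ℝ) ^ n)) ^ α :=
      Real.rpow_le_rpow (by positivity) hcon hα.le
    linarith [hN₁ n hn]
  obtain ⟨N₂, hN₂⟩ : ∃ N₂ : ℕ, ∀ n ≥ N₂, c₁ / 2 ^ (n + 3) < r₀ := by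
    refine ⟨⌈c₁ / r₀⌉₊, fun n hn => ?_⟩
    have h1 : c₁ / r₀ ≤ (n : ℝ) := le_trans (Nat.le_ceil _) (Nat.cast_le.2 hn)
    have h2 : (n : ℝ) < 2 ^ (n + 3) := by
      calc (n : ℝ) < 2 ^ n := by exact_mod_cast Nat.lt_two_pow_self (n := n)
        _ ≤ 2 ^ (n + 3) := by
          apply pow_le_pow_right₀ (by norm_num); omega
    have h3 : c₁ ≤ (n : ℝ) * r₀ := by
      rw [div_le_iff₀ hr₀] at h1; linarith
    rw [div_lt_iff₀ (by positivity)]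
    nlinarith [mul_lt_mul_of_pos_right h2 hr₀]
  set N : ℕ := max N₁ N₂ with hNdef
  -- fibers
  set nf : I → ℕ := fun i => Nat.log 2 ⌊L i⌋₊ with hnfdef
  have hL0 : ∀ i, (0:ℝ) ≤ L i := fun i => le_trans zero_le_one (hL i)
  have hfib_low : ∀ i, (2:ℝ) ^ (nf i) ≤ L i := by
    intro i
    have h2 : 2 ^ (nf i) ≤ ⌊L i⌋₊ :=
      Nat.pow_log_le_self 2 (Nat.pos_iff_ne_zero.1 (Nat.floor_pos.2 (hL i)))
    calc (2:ℝ) ^ (nf i) = ((2 ^ (nf i) : ℕ) : ℝ) := by push_cast; ring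
      _ ≤ (⌊L i⌋₊ : ℝ) := Nat.cast_le.2 h2
      _ ≤ L i := Nat.floor_le (hL0 i)
  have hfib_high : ∀ i, L i < (2:ℝ) ^ (nf i + 1) := by
    intro i
    have h2 : ⌊L i⌋₊ + 1 ≤ 2 ^ (nf i + 1) :=
      Nat.succ_le_of_lt (Nat.lt_pow_succ_log_self (by norm_num) _)
    calc L i < ⌊L i⌋₊ + 1 := Nat.lt_floor_add_one _
      _ ≤ (2:ℝ) ^ (nf i + 1) := by exact_mod_cast h2
  have hψfib : ∀ i, ψ (L i) ≤ ψ ((2:ℝ) ^ (nf i)) :=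
    fun i => hψmono _ _ (one_le_pow₀ one_le_two) (hfib_low i)
  -- separation within a fiber
  have hsep' : ∀ (n : ℕ) (i j : I), nf i = n → nf j = n → i ≠ j →
      c₁ / 2 ^ (n + 1) < dist (z i) (z j) := by
    intro n i j hi hj hij
    have h1 : max (L i) (L j) < 2 ^ (n + 1) :=
      max_lt (hi ▸ hfib_high i) (hj ▸ hfib_high j)
    have hmaxpos : 0 < max (L i) (L j) :=
      lt_of_lt_of_le one_pos ((hL i).trans (le_max_left _ _))
    exact (div_lt_div_of_pos_left hc₁ hmaxpos h1).trans (hsep i j hij)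
  -- disjointness of inner balls within a fiber
  have hdisj : ∀ n : ℕ, Pairwise (Function.onFun Disjoint
      (fun i : {i : I // nf i = n} => closedBall (z i) (c₁ / 2 ^ (n + 2)))) := by
    intro n i j hij
    have hne : (i : I) ≠ (j : I) := fun h => hij (Subtype.ext h)
    apply closedBall_disjoint_closedBall
    have hs := hsep' n i j i.2 j.2 hne
    have he : c₁ / 2 ^ (n + 2) + c₁ / 2 ^ (n + 2) = c₁ / 2 ^ (n + 1) := by
      rw [← add_div, pow_succ]
      ring
    linarith
  -- finiteness of support within a fiber
  have hsuppfin : ∀ n : ℕ, {i : I | nf i = n ∧ μ (B i) ≠ 0}.Finite := by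
    intro n
    obtain ⟨R, hR⟩ := hK.isBounded.subset_closedBall (0 : EuclideanSpace ℝ (Fin d))
    have himg : z '' {i : I | nf i = n ∧ μ (B i) ≠ 0}
        ⊆ closedBall 0 (R + ψ ((2:ℝ) ^ n)) := by
      rintro _ ⟨i, ⟨hin, hiμ⟩, rfl⟩
      have hKint : (K ∩ closedBall (z i) (ψ ((2:ℝ) ^ n))).Nonempty := by
        by_contra hem
        apply hiμ
        apply measure_mono_null (subset_trans
          (closedBall_subset_closedBall (hin ▸ hψfib i)) ?_) hsupp
        intro y hy
        simp only [Set.mem_compl_iff]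
        intro hyK
        exact hem ⟨y, hyK, hy⟩
      obtain ⟨ξ, hξK, hξb⟩ := hKint
      rw [mem_closedBall] at hξb ⊢
      calc dist (z i) 0 ≤ dist (z i) ξ + dist ξ 0 := dist_triangle _ _ _
        _ ≤ ψ ((2:ℝ) ^ n) + R := add_le_add (by rw [dist_comm]; exact hξb) (hR hξK)
        _ = R + ψ ((2:ℝ) ^ n) := by ring
    have himgsep : (z '' {i : I | nf i = n ∧ μ (B i) ≠ 0}).Pairwise
        fun x y => c₁ / 2 ^ (n + 1) < dist x y := by
      rintro _ ⟨i, hi, rfl⟩ _ ⟨j, hj, rfl⟩ hne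
      exact hsep' n i j hi.1 hj.1 fun h => hne (by rw [h])
    have hfin := aux_finite_of_separated (δ := c₁ / 2 ^ (n + 1)) (by positivity)
      ((isBounded_closedBall).subset himg) himgsep
    exact Set.Finite.of_finite_image hfin hz.injOn
  -- fiber sums are finite
  have hTfin : ∀ n : ℕ, ∑' i : {i : I // nf i = n}, μ (B i) ≠ ⊤ := by
    intro n
    have hsub : {p : {i : I // nf i = n} | μ (B (p : I)) ≠ 0}.Finite := by
      have hss : {p : {i : I // nf i = n} | μ (B (p : I)) ≠ 0}
          ⊆ Subtype.val ⁻¹' {i : I | nf i = n ∧ μ (B i) ≠ 0} := fun p hp => ⟨p.2, hp⟩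
      exact (((hsuppfin n).preimage Subtype.val_injective.injOn)).subset hss
    rw [tsum_eq_sum (s := hsub.toFinset) (fun p hp => by
      by_contra h
      exact hp (hsub.mem_toFinset.2 h))]
    exact (ENNReal.sum_lt_top.2 fun a _ => measure_lt_top μ _).ne
  -- core estimate
  have hcore : ∀ n : ℕ, N ≤ n → ∀ i : I, nf i = n →
      μ (B i) ≤ ENNReal.ofReal (C * (16 * ((2:ℝ) ^ n * ψ ((2:ℝ) ^ n)) / c₁) ^ α)
        * μ (closedBall (z i) (c₁ / 2 ^ (n + 2))) := by
    intro n hn i hi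
    have hρ0 : 0 ≤ ψ ((2:ℝ) ^ n) := hψ2 n
    have hψiρ : ψ (L i) ≤ ψ ((2:ℝ) ^ n) := hi ▸ hψfib i
    by_cases h0 : μ (closedBall (z i) (ψ ((2:ℝ) ^ n))) = 0
    · have hz0 : μ (B i) = 0 :=
        measure_mono_null (closedBall_subset_closedBall hψiρ) h0
      rw [hz0]; exact zero_le
    · have hρpos : 0 < ψ ((2:ℝ) ^ n) := by
        rcases eq_or_lt_of_le hρ0 with h | h
        · exfalso; apply h0; rw [← h, closedBall_zero]; exact hatom _
        · exact h
      have hKint : (K ∩ closedBall (z i) (ψ ((2:ℝ) ^ n))).Nonempty := by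
        by_contra hem
        apply h0
        apply measure_mono_null (?_ : closedBall (z i) (ψ ((2:ℝ) ^ n)) ⊆ Kᶜ) hsupp
        intro y hy
        simp only [Set.mem_compl_iff]
        intro hyK
        exact hem ⟨y, hyK, hy⟩
      obtain ⟨ξ, hξK, hξb⟩ := hKint
      rw [mem_closedBall] at hξb
      have hrpos : (0:ℝ) < c₁ / 2 ^ (n + 3) := by positivity
      have hrr₀ : c₁ / 2 ^ (n + 3) < r₀ := hN₂ n (le_trans (le_max_right _ _) hn)
      have hεpos : (0:ℝ) < 16 * ((2:ℝ) ^ n * ψ ((2:ℝ) ^ n)) / c₁ := by positivity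
      have h8 : (2:ℝ) ^ (n + 3) = 8 * 2 ^ n := by rw [pow_add]; ring
      have hεr : (16 * ((2:ℝ) ^ n * ψ ((2:ℝ) ^ n)) / c₁) * (c₁ / 2 ^ (n + 3))
          = 2 * ψ ((2:ℝ) ^ n) := by
        rw [h8]; field_simp; ring
      have hρsmall : ψ ((2:ℝ) ^ n) ≤ c₁ / 2 ^ (n + 3) := by
        have hlt := hN₁ n (le_trans (le_max_left _ _) hn)
        have h2n : (0:ℝ) < 2 ^ n := by positivity
        rw [le_div_iff₀ (by positivity), h8]
        nlinarith
      have hsub1 : B i ⊆ closedBall ξ ((16 * ((2:ℝ) ^ n * ψ ((2:ℝ) ^ n)) / c₁)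
          * (c₁ / 2 ^ (n + 3))) := by
        rw [hεr]
        intro y hy
        rw [mem_closedBall] at hy ⊢
        calc dist y ξ ≤ dist y (z i) + dist (z i) ξ := dist_triangle _ _ _
          _ ≤ ψ (L i) + ψ ((2:ℝ) ^ n) := add_le_add hy (by rw [dist_comm]; exact hξb)
          _ ≤ 2 * ψ ((2:ℝ) ^ n) := by linarith
      have hsub2 : closedBall ξ (c₁ / 2 ^ (n + 3)) ⊆ closedBall (z i) (c₁ / 2 ^ (n + 2)) := by
        intro y hy
        rw [mem_closedBall] at hy ⊢
        have he : c₁ / 2 ^ (n + 3) + c₁ / 2 ^ (n + 3) = c₁ / 2 ^ (n + 2) := by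
          rw [← add_div, pow_succ]
          ring
        calc dist y (z i) ≤ dist y ξ + dist ξ (z i) := dist_triangle _ _ _
          _ ≤ c₁ / 2 ^ (n + 3) + ψ ((2:ℝ) ^ n) := add_le_add hy hξb
          _ ≤ c₁ / 2 ^ (n + 3) + c₁ / 2 ^ (n + 3) := by linarith
          _ = c₁ / 2 ^ (n + 2) := he
      calc μ (B i) ≤ μ (closedBall ξ ((16 * ((2:ℝ) ^ n * ψ ((2:ℝ) ^ n)) / c₁)
            * (c₁ / 2 ^ (n + 3)))) := measure_mono hsub1
        _ ≤ ENNReal.ofReal (C * (16 * ((2:ℝ) ^ n * ψ ((2:ℝ) ^ n)) / c₁) ^ α)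
            * μ (closedBall ξ (c₁ / 2 ^ (n + 3))) := hdec _ hεpos ξ hξK _ hrpos hrr₀
        _ ≤ ENNReal.ofReal (C * (16 * ((2:ℝ) ^ n * ψ ((2:ℝ) ^ n)) / c₁) ^ α)
            * μ (closedBall (z i) (c₁ / 2 ^ (n + 2))) :=
          mul_le_mul_right (measure_mono hsub2) _
  -- fiber sum bound for large n
  have hTle : ∀ n : ℕ, N ≤ n → ∑' i : {i : I // nf i = n}, μ (B i)
      ≤ ENNReal.ofReal (C * (16 / c₁) ^ α)
        * ENNReal.ofReal (((2:ℝ) ^ n * ψ ((2:ℝ) ^ n)) ^ α) := by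
    intro n hn
    have hg0 : 0 ≤ (2:ℝ) ^ n * ψ ((2:ℝ) ^ n) := mul_nonneg (by positivity) (hψ2 n)
    calc ∑' i : {i : I // nf i = n}, μ (B i)
        ≤ ∑' i : {i : I // nf i = n},
            ENNReal.ofReal (C * (16 * ((2:ℝ) ^ n * ψ ((2:ℝ) ^ n)) / c₁) ^ α)
            * μ (closedBall (z (i : I)) (c₁ / 2 ^ (n + 2))) :=
          ENNReal.tsum_le_tsum fun i => hcore n hn i i.2
      _ = ENNReal.ofReal (C * (16 * ((2:ℝ) ^ n * ψ ((2:ℝ) ^ n)) / c₁) ^ α)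
            * ∑' i : {i : I // nf i = n}, μ (closedBall (z (i : I)) (c₁ / 2 ^ (n + 2))) :=
          ENNReal.tsum_mul_left
      _ ≤ ENNReal.ofReal (C * (16 * ((2:ℝ) ^ n * ψ ((2:ℝ) ^ n)) / c₁) ^ α) * 1 := by
          apply mul_le_mul_right
          rw [← measure_iUnion (hdisj n) fun i => measurableSet_closedBall]
          exact prob_le_one
      _ = ENNReal.ofReal (C * (16 * ((2:ℝ) ^ n * ψ ((2:ℝ) ^ n)) / c₁) ^ α) := mul_one _
      _ ≤ ENNReal.ofReal (C * (16 / c₁) ^ α)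
            * ENNReal.ofReal (((2:ℝ) ^ n * ψ ((2:ℝ) ^ n)) ^ α) := by
          rw [← ENNReal.ofReal_mul (by positivity)]
          apply ENNReal.ofReal_le_ofReal
          have he : (16 * ((2:ℝ) ^ n * ψ ((2:ℝ) ^ n)) / c₁) ^ α
              = (16 / c₁) ^ α * ((2:ℝ) ^ n * ψ ((2:ℝ) ^ n)) ^ α := by
            rw [show 16 * ((2:ℝ) ^ n * ψ ((2:ℝ) ^ n)) / c₁
              = (16 / c₁) * ((2:ℝ) ^ n * ψ ((2:ℝ) ^ n)) by ring]
            exact Real.mul_rpow (by positivity) hg0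
          rw [he]
          exact le_of_eq (by ring)
  -- total sum is finite
  have htsum : ∑' i : I, μ (B i) ≠ ⊤ := by
    have hsig : ∑' i : I, μ (B i)
        = ∑' n : ℕ, ∑' i : {i : I // nf i = n}, μ (B i) := by
      rw [← (Equiv.sigmaFiberEquiv nf).tsum_eq fun i => μ (B i)]
      exact ENNReal.tsum_sigma' _
    have hpt : ∀ n : ℕ, (∑' i : {i : I // nf i = n}, μ (B i))
        ≤ (if n < N then ∑' i : {i : I // nf i = n}, μ (B i) else 0)
          + (if n < N then 0 else ENNReal.ofReal (C * (16 / c₁) ^ α)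
              * ENNReal.ofReal (((2:ℝ) ^ n * ψ ((2:ℝ) ^ n)) ^ α)) := by
      intro n
      by_cases h : n < N
      · simp [h]
      · simp only [h, if_false, zero_add]
        exact hTle n (le_of_not_gt h)
    rw [hsig]
    apply ne_top_of_le_ne_top ?_ (ENNReal.tsum_le_tsum hpt)
    rw [ENNReal.tsum_add]
    apply ENNReal.add_ne_top.2
    constructor
    · rw [tsum_eq_sum (s := Finset.range N)
        (fun n hn => if_neg (by simpa using hn))]
      refine (ENNReal.sum_lt_top.2 fun n _ => ?_).ne
      split
      · exact (hTfin n).lt_top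
      · exact ENNReal.zero_lt_top
    · have hbound : ∀ n : ℕ, (if n < N then 0 else ENNReal.ofReal (C * (16 / c₁) ^ α)
          * ENNReal.ofReal (((2:ℝ) ^ n * ψ ((2:ℝ) ^ n)) ^ α))
          ≤ ENNReal.ofReal (C * (16 / c₁) ^ α)
            * ENNReal.ofReal (((2:ℝ) ^ n * ψ ((2:ℝ) ^ n)) ^ α) := by
        intro n; split
        · exact zero_le
        · exact le_rfl
      apply ne_top_of_le_ne_top ?_ (ENNReal.tsum_le_tsum hbound)
      rw [ENNReal.tsum_mul_left]
      apply ENNReal.mul_ne_top ENNReal.ofReal_ne_top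
      rw [← ENNReal.ofReal_tsum_of_nonneg hb0 hb]
      exact ENNReal.ofReal_ne_top
  -- Borel–Cantelli conclusion
  have hsubF : ∀ F : Finset I,
      {ξ : EuclideanSpace ℝ (Fin d) | {i : I | dist ξ (z i) < ψ (L i)}.Infinite}
      ⊆ ⋃ i : {i : I // i ∉ F}, B (i : I) := by
    intro F ξ hξ
    obtain ⟨i, hi, hiF⟩ := hξ.exists_notMem_finset F
    exact Set.mem_iUnion.2 ⟨⟨i, hiF⟩, mem_closedBall.2 (le_of_lt hi)⟩
  have hten := ENNReal.tendsto_tsum_compl_atTop_zero htsum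
  have hle : ∀ F : Finset I,
      μ {ξ : EuclideanSpace ℝ (Fin d) | {i : I | dist ξ (z i) < ψ (L i)}.Infinite}
      ≤ ∑' i : {i : I // i ∉ F}, μ (B (i : I)) := fun F =>
    le_trans (measure_mono (hsubF F)) (measure_iUnion_le _)
  have hfinal := ge_of_tendsto' hten hle
  exact le_antisymm hfinal zero_le
end

section
/- Let K ⊆ ℝ^d be compact, let α > 0, and let μ be a Borel probability measure on ℝ^d with support contained in K which is weakly absolutely α-decaying. Let I be a countable index set, z : I → ℝ^d an injective family of points, L : I → [1,∞) weights, and suppose there is c₁ > 0 such that |z_i − z_j| > c₁/max(L_i, L_j) for all i ≠ j. Then for every τ > 1, μ({ξ ∈ ℝ^d : |ξ − z_i| < L_i^{−τ} for infinitely many i ∈ I}) = 0; that is, K is μ-extremal with respect to the family (z_i, L_i). -/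
open Metric MeasureTheory

/-- A uniformly separated family of points inside a closed ball of a proper
metric space has a finite index set. -/
lemma finite_of_separated {I : Type*} {X : Type*} [MetricSpace X] [ProperSpace X]
    {T : Set I} {f : I → X} {x : X} {R δ : ℝ} (hδ : 0 < δ)
    (hb : ∀ i ∈ T, f i ∈ closedBall x R)
    (hsep : ∀ i ∈ T, ∀ j ∈ T, i ≠ j → δ < dist (f i) (f j)) : T.Finite := by
  obtain ⟨t, htf, hcov⟩ := (totallyBounded_iff.mp
    (isCompact_closedBall x R).totallyBounded) (δ/2) (half_pos hδ)
  have hsub : T ⊆ ⋃ y ∈ t, {i ∈ T | f i ∈ ball y (δ/2)} := by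
    intro i hi
    have := hcov (hb i hi)
    simp only [Set.mem_iUnion] at this ⊢
    obtain ⟨y, hy, hby⟩ := this
    exact ⟨y, hy, hi, hby⟩
  refine Set.Finite.subset (htf.biUnion fun y _ => ?_) hsub
  refine Set.Subsingleton.finite fun i hi j hj => ?_
  by_contra hij
  have h := hsep i hi.1 j hj.1 hij
  have : dist (f i) (f j) < δ := by
    calc dist (f i) (f j) ≤ dist (f i) y + dist y (f j) := dist_triangle _ _ _
    _ < δ/2 + δ/2 := by
        have h1 := mem_ball.mp hi.2
        have h2 := mem_ball.mp hj.2
        rw [dist_comm y (f j)]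
        linarith
    _ = δ := by ring
  linarith

/-- sets supporting weakly absolutely α-decaying measures are
μ-extremal with respect to a separated family (abstract form of the paper's
Corollary 1). -/
theorem extremal_of_weakly_decaying {d : ℕ} {I : Type*} [Countable I]
    (K : Set (EuclideanSpace ℝ (Fin d))) (hK : IsCompact K)
    (α : ℝ) (hα : 0 < α)
    (μ : Measure (EuclideanSpace ℝ (Fin d))) [IsProbabilityMeasure μ]
    (hsupp : μ Kᶜ = 0)
    (hdecay : ∃ C > (0:ℝ), ∃ r₀ > (0:ℝ), ∀ ε > (0:ℝ), ∀ x ∈ K, ∀ r : ℝ, 0 < r → r < r₀ →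
      μ (closedBall x (ε * r)) ≤ ENNReal.ofReal (C * ε ^ α) * μ (closedBall x r))
    (z : I → EuclideanSpace ℝ (Fin d)) (hz : Function.Injective z)
    (L : I → ℝ) (hL : ∀ i, 1 ≤ L i)
    (c₁ : ℝ) (hc₁ : 0 < c₁)
    (hsep : ∀ i j, i ≠ j → c₁ / max (L i) (L j) < dist (z i) (z j)) :
    ∀ τ : ℝ, 1 < τ →
      μ {ξ : EuclideanSpace ℝ (Fin d) | {i : I | dist ξ (z i) < L i ^ (-τ)}.Infinite} = 0 := by
  classical
  obtain ⟨C, hC, r₀, hr₀, hdec⟩ := hdecay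
  intro τ hτ
  have hτ0 : (0:ℝ) < τ := by linarith
  -- basic constants
  set q : ℝ := (2:ℝ) ^ ((1:ℝ) - τ) with hqdef
  have hq0 : 0 < q := Real.rpow_pos_of_pos two_pos _
  have hq1 : q < 1 := Real.rpow_lt_one_of_one_lt_of_neg one_lt_two (by linarith)
  set P : ℕ → ℝ := fun k => (2:ℝ) ^ k with hPdef
  have hP0 : ∀ k, (0:ℝ) < P k := fun k => by positivity
  have hP1 : ∀ k, (1:ℝ) ≤ P k := fun k => one_le_pow₀ one_le_two
  set ρ : ℕ → ℝ := fun k => (P k) ^ (-τ) with hρdef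
  have hρ0 : ∀ k, 0 < ρ k := fun k => Real.rpow_pos_of_pos (hP0 k) _
  have hρ1 : ∀ k, ρ k ≤ 1 := fun k =>
    Real.rpow_le_one_of_one_le_of_nonpos (hP1 k) (by linarith)
  have hρeq : ∀ k, ρ k = q ^ k / P k := by
    intro k
    have e1 : (q:ℝ) ^ k = (2:ℝ) ^ (((1:ℝ) - τ) * k) := by
      rw [hqdef, ← Real.rpow_natCast ((2:ℝ) ^ ((1:ℝ) - τ)) k, ← Real.rpow_mul (by norm_num)]
    have e2 : P k = (2:ℝ) ^ ((k:ℝ)) := by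
      simp only [hPdef]
      exact (Real.rpow_natCast 2 k).symm
    show (P k) ^ (-τ) = q ^ k / P k
    rw [e2, e1, ← Real.rpow_mul (by norm_num : (0:ℝ) ≤ 2),
      ← Real.rpow_sub two_pos]
    congr 1
    ring
  -- antitonicity of rpow with negative exponent
  have hanti : ∀ a b : ℝ, 0 < a → a ≤ b → b ^ (-τ) ≤ a ^ (-τ) := by
    intro a b ha hab
    rw [Real.rpow_neg ha.le, Real.rpow_neg (by linarith)]
    exact inv_anti₀ (Real.rpow_pos_of_pos ha τ)
      (Real.rpow_le_rpow ha.le hab hτ0.le)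
  -- layers
  set S : ℕ → Set I := fun k => {i | P k ≤ L i ∧ L i < P (k+1)} with hSdef
  set E : ℕ → Set (EuclideanSpace ℝ (Fin d)) :=
    fun k => ⋃ i ∈ S k, closedBall (z i) (ρ k) with hEdef
  have hcover : ∀ i, ∃ k, i ∈ S k := by
    intro i
    set n := ⌊L i⌋₊ with hn
    have hn1 : 1 ≤ n := Nat.le_floor (by exact_mod_cast hL i)
    refine ⟨Nat.log 2 n, ?_, ?_⟩
    · calc P (Nat.log 2 n) = ((2 ^ Nat.log 2 n : ℕ) : ℝ) := by push_cast [hPdef]; ring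
      _ ≤ (n : ℝ) := by exact_mod_cast Nat.pow_log_le_self 2 (by omega)
      _ ≤ L i := Nat.floor_le (by linarith [hL i])
    · calc L i < n + 1 := Nat.lt_floor_add_one _
      _ ≤ ((2 ^ (Nat.log 2 n + 1) : ℕ) : ℝ) := by
            exact_mod_cast Nat.succ_le_of_lt (Nat.lt_pow_succ_log_self (by norm_num) n)
      _ = P (Nat.log 2 n + 1) := by push_cast [hPdef]; ring
  have hEmem : ∀ k, ∀ i ∈ S k, ∀ ξ, dist ξ (z i) < L i ^ (-τ) → ξ ∈ E k := by
    intro k i hi ξ hd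
    have h1 : L i ^ (-τ) ≤ ρ k := hanti _ _ (hP0 k) hi.1
    exact Set.mem_biUnion hi (mem_closedBall.mpr (by linarith))
  -- in each layer only finitely many points can be hit
  have hfib : ∀ ξ, ∀ k, {i | dist ξ (z i) < L i ^ (-τ) ∧ i ∈ S k}.Finite := by
    intro ξ k
    refine finite_of_separated (f := z) (x := ξ) (R := 1)
      (δ := c₁ / P (k+1)) (by positivity) ?_ ?_
    · intro i hi
      have h1 : L i ^ (-τ) ≤ ρ k := hanti _ _ (hP0 k) hi.2.1
      have := hρ1 k
      rw [mem_closedBall, dist_comm]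
      linarith [hi.1]
    · intro i hi j hj hij
      have h1 := hsep i j hij
      have h2 : max (L i) (L j) ≤ P (k+1) :=
        max_le hi.2.2.le hj.2.2.le
      have hmaxpos : (0:ℝ) < max (L i) (L j) :=
        lt_of_lt_of_le one_pos ((hL i).trans (le_max_left _ _))
      have h3 : c₁ / P (k+1) ≤ c₁ / max (L i) (L j) := by gcongr
      linarith
  -- key measure estimate on each layer
  have hP2 : ∀ k, P (k+1) = 2 * P k := by
    intro k
    simp only [hPdef, pow_succ]
    ring
  have hkey : ∀ k : ℕ, q ^ k ≤ c₁ / 8 → c₁ / (8 * P k) < r₀ →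
      μ (E k) ≤ ENNReal.ofReal ((C * (16 / c₁) ^ α) * (q ^ α) ^ k) := by
    intro k hk1 hk2
    set r : ℝ := c₁ / (8 * P k) with hrdef
    have hr0 : 0 < r := by
      have := hP0 k
      positivity
    set ε : ℝ := (16 / c₁) * q ^ k with hεdef
    have hε0 : 0 < ε := by positivity
    have hPk := hP0 k
    have hεr : ε * r = 2 * ρ k := by
      rw [hεdef, hrdef, hρeq k]
      field_simp
      ring
    have hρr : 2 * ρ k ≤ c₁ / (4 * P k) := by
      calc 2 * ρ k = (2 * q ^ k) / P k := by rw [hρeq k]; ring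
        _ ≤ (c₁ / 4) / P k := by gcongr; linarith
        _ = c₁ / (4 * P k) := by ring
    have hεα : C * ε ^ α = (C * (16 / c₁) ^ α) * (q ^ α) ^ k := by
      have h1 : ((q : ℝ) ^ k) ^ α = (q ^ α) ^ k := by
        rw [← Real.rpow_natCast q k, ← Real.rpow_natCast (q ^ α) k,
          ← Real.rpow_mul hq0.le, ← Real.rpow_mul hq0.le, mul_comm]
      rw [hεdef, Real.mul_rpow (by positivity) (by positivity), h1]
      ring
    set g : I → Set (EuclideanSpace ℝ (Fin d)) := fun i =>
      if h : (K ∩ closedBall (z i) (ρ k)).Nonempty then closedBall h.some r else ∅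
      with hgdef
    have hgmeas : ∀ i, MeasurableSet (g i) := by
      intro i
      simp only [hgdef]
      split
      · exact measurableSet_closedBall
      · exact MeasurableSet.empty
    have hgball : ∀ i, ∀ h : (K ∩ closedBall (z i) (ρ k)).Nonempty,
        h.some ∈ K ∧ dist h.some (z i) ≤ ρ k ∧ g i = closedBall h.some r := by
      intro i h
      refine ⟨h.some_mem.1, mem_closedBall.mp h.some_mem.2, ?_⟩
      simp only [hgdef]
      rw [dif_pos h]
    have hball : ∀ i ∈ S k, μ (closedBall (z i) (ρ k)) ≤
        ENNReal.ofReal (C * ε ^ α) * μ (g i) := by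
      intro i _
      by_cases h : (K ∩ closedBall (z i) (ρ k)).Nonempty
      · obtain ⟨hxK, hxd, hgi⟩ := hgball i h
        have hsub : closedBall (z i) (ρ k) ⊆ closedBall h.some (ε * r) := by
          rw [hεr]
          intro w hw
          rw [mem_closedBall] at hw ⊢
          calc dist w h.some ≤ dist w (z i) + dist (z i) h.some := dist_triangle _ _ _
            _ ≤ ρ k + ρ k := add_le_add hw (by rw [dist_comm]; exact hxd)
            _ = 2 * ρ k := by ring
        calc μ (closedBall (z i) (ρ k)) ≤ μ (closedBall h.some (ε * r)) :=
              measure_mono hsub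
          _ ≤ ENNReal.ofReal (C * ε ^ α) * μ (closedBall h.some r) :=
              hdec ε hε0 h.some hxK r hr0 hk2
          _ = ENNReal.ofReal (C * ε ^ α) * μ (g i) := by rw [hgi]
      · have hsub : closedBall (z i) (ρ k) ⊆ Kᶜ := fun w hw hwK => h ⟨w, hwK, hw⟩
        have h0 : μ (closedBall (z i) (ρ k)) = 0 :=
          le_antisymm ((measure_mono hsub).trans_eq hsupp) zero_le
        rw [h0]
        exact zero_le
    have hdisj : Pairwise (Function.onFun Disjoint fun i : ↥(S k) => g ↑i) := by
      intro i j hij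
      have hijI : (i : I) ≠ (j : I) := fun hcc => hij (Subtype.ext hcc)
      simp only [Function.onFun, hgdef]
      split
      · case isTrue hi' =>
        split
        · case isTrue hj' =>
          apply closedBall_disjoint_closedBall
          obtain ⟨xiK, xid, _⟩ := hgball ↑i hi'
          obtain ⟨xjK, xjd, _⟩ := hgball ↑j hj'
          have hzz := hsep ↑i ↑j hijI
          have hmaxpos : (0 : ℝ) < max (L ↑i) (L ↑j) :=
            lt_of_lt_of_le one_pos ((hL ↑i).trans (le_max_left _ _))
          have hmax : max (L ↑i) (L ↑j) ≤ P (k+1) := max_le i.2.2.le j.2.2.le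
          have hPP : c₁ / P (k+1) ≤ c₁ / max (L ↑i) (L ↑j) := by gcongr
          have e2A : c₁ / P (k+1) = 2 * (c₁ / (4 * P k)) := by
            rw [hP2 k]
            field_simp
            ring
          have t1 : dist (z ↑i) (z ↑j) ≤
              dist (z ↑i) hi'.some + dist hi'.some hj'.some + dist hj'.some (z ↑j) :=
            dist_triangle4 _ _ _ _
          have d1 : dist (z ↑i) hi'.some ≤ ρ k := by rw [dist_comm]; exact xid
          have d2 : dist hj'.some (z ↑j) ≤ ρ k := xjd
          have e3 : r + r = c₁ / (4 * P k) := by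
            rw [hrdef]
            field_simp
            ring
          linarith
        · case isFalse _ => exact Set.disjoint_empty _
      · case isFalse _ => exact Set.empty_disjoint _
    calc μ (E k) = μ (⋃ i ∈ S k, closedBall (z i) (ρ k)) := by rw [hEdef]
      _ ≤ ∑' (i : ↥(S k)), μ (closedBall (z ↑i) (ρ k)) :=
          measure_biUnion_le μ (S k).to_countable _
      _ ≤ ∑' (i : ↥(S k)), ENNReal.ofReal (C * ε ^ α) * μ (g ↑i) :=
          ENNReal.tsum_le_tsum fun i => hball ↑i i.2
      _ = ENNReal.ofReal (C * ε ^ α) * ∑' (i : ↥(S k)), μ (g ↑i) := ENNReal.tsum_mul_left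
      _ ≤ ENNReal.ofReal (C * ε ^ α) * 1 := by
          gcongr
          calc ∑' (i : ↥(S k)), μ (g ↑i) = μ (⋃ i : ↥(S k), g ↑i) :=
                (measure_iUnion hdisj fun i => hgmeas ↑i).symm
            _ ≤ μ Set.univ := measure_mono (Set.subset_univ _)
            _ = 1 := measure_univ
      _ = ENNReal.ofReal ((C * (16 / c₁) ^ α) * (q ^ α) ^ k) := by rw [mul_one, hεα]
  -- choose N so that the estimates apply for all k ≥ N
  have hNev : ∀ᶠ k in Filter.atTop, q ^ k ≤ c₁ / 8 ∧ c₁ / (8 * P k) < r₀ := by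
    have t1 : Filter.Tendsto (fun k : ℕ => q ^ k) Filter.atTop (nhds 0) :=
      tendsto_pow_atTop_nhds_zero_of_lt_one hq0.le hq1
    have t2 : Filter.Tendsto (fun k : ℕ => c₁ / (8 * P k)) Filter.atTop (nhds 0) := by
      have he : (fun k : ℕ => c₁ / (8 * P k)) = fun k : ℕ => (c₁ / 8) * ((1:ℝ)/2) ^ k := by
        funext k
        have := hP0 k
        simp only [hPdef, div_pow, one_pow]
        rw [div_mul_div_comm, mul_one]
      rw [he]
      simpa using (tendsto_pow_atTop_nhds_zero_of_lt_one
        (by norm_num : (0:ℝ) ≤ 1/2) (by norm_num : (1:ℝ)/2 < 1)).const_mul (c₁/8)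
    exact ((t1.eventually_le_const (by positivity)).and (t2.eventually_lt_const hr₀))
  obtain ⟨N, hN⟩ := Filter.eventually_atTop.mp hNev
  -- summability
  set a : ℝ := C * (16 / c₁) ^ α with hadef
  set Q : ℝ := q ^ α with hQdef
  have hQ0 : 0 ≤ Q := by positivity
  have hQ1 : Q < 1 := Real.rpow_lt_one hq0.le hq1 hα
  have hsum : ∑' m : ℕ, μ (E (m + N)) ≠ ⊤ := by
    have hle : ∀ m : ℕ, μ (E (m + N)) ≤
        ENNReal.ofReal (a * Q ^ N) * ENNReal.ofReal Q ^ m := by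
      intro m
      have h := hkey (m + N) (hN _ (Nat.le_add_left N m)).1 (hN _ (Nat.le_add_left N m)).2
      refine h.trans_eq ?_
      rw [← ENNReal.ofReal_pow hQ0, ← ENNReal.ofReal_mul (by positivity)]
      congr 1
      rw [pow_add]
      ring
    have hb : ∑' m : ℕ, μ (E (m + N)) ≤
        ENNReal.ofReal (a * Q ^ N) * (1 - ENNReal.ofReal Q)⁻¹ := by
      calc ∑' m : ℕ, μ (E (m + N))
          ≤ ∑' m : ℕ, ENNReal.ofReal (a * Q ^ N) * ENNReal.ofReal Q ^ m :=
            ENNReal.tsum_le_tsum hle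
        _ = ENNReal.ofReal (a * Q ^ N) * ∑' m : ℕ, ENNReal.ofReal Q ^ m :=
            ENNReal.tsum_mul_left
        _ = ENNReal.ofReal (a * Q ^ N) * (1 - ENNReal.ofReal Q)⁻¹ := by
            rw [ENNReal.tsum_geometric]
    refine ne_top_of_le_ne_top ?_ hb
    apply ENNReal.mul_ne_top ENNReal.ofReal_ne_top
    rw [Ne, ENNReal.inv_eq_top]
    exact (tsub_pos_of_lt (ENNReal.ofReal_lt_one.mpr hQ1)).ne'
  -- Borel–Cantelli
  have hls : μ (Filter.limsup (fun m : ℕ => E (m + N)) Filter.atTop) = 0 :=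
    measure_limsup_atTop_eq_zero hsum
  refine measure_mono_null ?_ hls
  intro ξ hξ
  rw [Set.mem_setOf_eq] at hξ
  rw [Filter.mem_limsup_iff_frequently_mem, Filter.frequently_atTop]
  intro m₀
  have hbad : (⋃ k ∈ Set.Iio (m₀ + N), {i | dist ξ (z i) < L i ^ (-τ) ∧ i ∈ S k}).Finite :=
    Set.Finite.biUnion (Set.finite_Iio _) fun k _ => hfib ξ k
  obtain ⟨i, hiH, hibad⟩ := (hξ.diff hbad).nonempty
  obtain ⟨k, hik⟩ := hcover i
  have hk : m₀ + N ≤ k := by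
    by_contra hlt
    push_neg at hlt
    exact hibad (Set.mem_iUnion₂.mpr ⟨k, hlt, hiH, hik⟩)
  refine ⟨k - N, by omega, ?_⟩
  have hkN : k - N + N = k := by omega
  rw [hkN]
  exact hEmem k i hik ξ hiH
end

section
/- Let Λ ⊆ ℝ^d be a closed set and let S ⊆ Λ be absolute winning on Λ. Let δ > 0 and let K ⊆ Λ be a closed Ahlfors δ-regular set. Then K ∩ S is winning for Schmidt's game on K. -/
open Metric MeasureTheory

/-- A ball in `ℝ^d`, given by its center and radius. -/
abbrev GBall (d : ℕ) := EuclideanSpace ℝ (Fin d) × ℝ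

/-- The closed ball in `ℝ^d` determined by a center–radius pair. -/
def gset {d : ℕ} (B : GBall d) : Set (EuclideanSpace ℝ (Fin d)) :=
  closedBall B.1 B.2

/-- A strategy for Ayesha is causal when its response at time `k` depends only on
Bhupen's moves up to time `k`. -/
def IsCausal {d : ℕ} (σ : (ℕ → GBall d) → ℕ → GBall d) : Prop :=
  ∀ B B' : ℕ → GBall d, ∀ k : ℕ, (∀ i, i ≤ k → B i = B' i) → σ B k = σ B' k

/-- Legality of Bhupen's moves up to time `k` in Schmidt's `(α,β)`-game on `K`,
given Ayesha's strategy `σ`. -/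
def SchmidtLegal {d : ℕ} (K : Set (EuclideanSpace ℝ (Fin d))) (β : ℝ)
    (σ : (ℕ → GBall d) → ℕ → GBall d) (B : ℕ → GBall d) (k : ℕ) : Prop :=
  (B 0).1 ∈ K ∧ 0 < (B 0).2 ∧
    ∀ i, i < k → (B (i + 1)).1 ∈ K ∧ (B (i + 1)).2 = β * (σ B i).2 ∧
      gset (B (i + 1)) ⊆ gset (σ B i)

/-- `σ` is a winning strategy for Ayesha in Schmidt's `(α,β)`-game on `K` with
target set `S`. -/
def SchmidtWinningStrat {d : ℕ} (K S : Set (EuclideanSpace ℝ (Fin d))) (α β : ℝ)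
    (σ : (ℕ → GBall d) → ℕ → GBall d) : Prop :=
  IsCausal σ ∧
    (∀ B k, SchmidtLegal K β σ B k →
      (σ B k).1 ∈ K ∧ (σ B k).2 = α * (B k).2 ∧ gset (σ B k) ⊆ gset (B k)) ∧
    ∀ B : ℕ → GBall d, (∀ k, SchmidtLegal K β σ B k) →
      ∀ x, (∀ k, x ∈ gset (B k)) → x ∈ S

/-- `S` is winning for Schmidt's game on `K`. -/
def WinningOn {d : ℕ} (K S : Set (EuclideanSpace ℝ (Fin d))) : Prop :=
  ∃ α : ℝ, 0 < α ∧ α < 1 ∧ ∀ β : ℝ, 0 < β → β < 1 →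
    ∃ σ, SchmidtWinningStrat K S α β σ

/-- Legality of Bhupen's moves up to time `k` in the absolute `β`-game on `Λ`,
given Ayesha's strategy `σ`: the initial ball is centered in `Λ` with positive
radius, and each subsequent ball `B (i+1)` is centered in `Λ`, has radius `β`
times the radius of Ayesha's deleted ball `σ B i`, and is contained in
`B i ∖ (σ B i)`. -/
def AbsLegal {d : ℕ} (Λ : Set (EuclideanSpace ℝ (Fin d))) (β : ℝ)
    (σ : (ℕ → GBall d) → ℕ → GBall d) (B : ℕ → GBall d) (k : ℕ) : Prop :=
  (B 0).1 ∈ Λ ∧ 0 < (B 0).2 ∧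
    ∀ i, i < k → (B (i + 1)).1 ∈ Λ ∧ (B (i + 1)).2 = β * (σ B i).2 ∧
      gset (B (i + 1)) ⊆ gset (B i) \ gset (σ B i)

/-- `σ` is a winning strategy for Ayesha in the absolute `β`-game on `Λ` with
target set `S`: it is causal, it answers legal histories with legal moves (balls
centered in `Λ` of radius `β` times the radius of Bhupen's ball), and the outcome
of any legal play following it lies in `S` (if Bhupen gets stuck, there is no such
play, so Ayesha wins by convention). -/
def AbsWinningStrat {d : ℕ} (Λ S : Set (EuclideanSpace ℝ (Fin d))) (β : ℝ)
    (σ : (ℕ → GBall d) → ℕ → GBall d) : Prop :=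
  IsCausal σ ∧
    (∀ B k, AbsLegal Λ β σ B k → (σ B k).1 ∈ Λ ∧ (σ B k).2 = β * (B k).2) ∧
    ∀ B : ℕ → GBall d, (∀ k, AbsLegal Λ β σ B k) →
      ∀ x, (∀ k, x ∈ gset (B k)) → x ∈ S

/-- `S` is absolute winning on `Λ`: Ayesha has a winning strategy in the absolute
`β`-game on `Λ` for every `0 < β < 1`. -/
def AbsoluteWinningOn {d : ℕ} (Λ S : Set (EuclideanSpace ℝ (Fin d))) : Prop :=
  ∀ β : ℝ, 0 < β → β < 1 → ∃ σ, AbsWinningStrat Λ S β σ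

lemma geom_lemma {d : ℕ} (K : Set (EuclideanSpace ℝ (Fin d)))
    (μ : Measure (EuclideanSpace ℝ (Fin d))) (hμK : μ Kᶜ = 0)
    (C r₀ δ : ℝ) (hC : 0 < C) (hr₀ : 0 < r₀) (hδ : 0 < δ)
    (hreg : ∀ x ∈ K, ∀ r : ℝ, 0 < r → r < r₀ →
      ENNReal.ofReal (C⁻¹ * r ^ δ) ≤ μ (closedBall x r) ∧
      μ (closedBall x r) ≤ ENNReal.ofReal (C * r ^ δ))
    (α ε : ℝ) (hα : 0 < α) (hα2 : α ≤ 2⁻¹) (hε : 0 ≤ ε)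
    (hsmall : 2*(α+ε) < 1)
    (hkey : C * (2*(α+ε)) ^ δ < C⁻¹ * (2:ℝ)⁻¹ ^ δ)
    (x : EuclideanSpace ℝ (Fin d)) (hx : x ∈ K) (r : ℝ) (hr : 0 < r) (hrr : r < r₀)
    (z : EuclideanSpace ℝ (Fin d)) (ρ : ℝ) (hρ : ρ ≤ ε * r) :
    ∃ y, y ∈ K ∧ closedBall y (α*r) ⊆ closedBall x r \ closedBall z ρ := by
  have hαr : α * r ≤ 2⁻¹ * r := mul_le_mul_of_nonneg_right hα2 hr.le
  suffices h : ∃ y, y ∈ K ∧ dist y x ≤ r/2 ∧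
      Disjoint (closedBall y (α*r)) (closedBall z ρ) by
    obtain ⟨y, hyK, hyx, hdisj⟩ := h
    refine ⟨y, hyK, fun w hw => ⟨?_, ?_⟩⟩
    · have hwy : dist w y ≤ α * r := mem_closedBall.1 hw
      have : dist w x ≤ dist w y + dist y x := dist_triangle w y x
      exact mem_closedBall.2 (by linarith)
    · exact Set.disjoint_left.1 hdisj hw
  by_contra hcon
  push_neg at hcon
  have key : ∀ y, y ∈ K → dist y x ≤ r/2 → dist y z ≤ (α+ε)*r := by
    intro y hy hyx
    obtain ⟨w, hw1, hw2⟩ := Set.not_disjoint_iff.1 (hcon y hy hyx)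
    have h1 : dist w y ≤ α*r := mem_closedBall.1 hw1
    have h2 : dist w z ≤ ρ := mem_closedBall.1 hw2
    have := dist_triangle y w z
    have := dist_comm w y
    nlinarith [dist_nonneg (x := y) (y := w)]
  have hxz : dist x z ≤ (α+ε)*r := key x hx (by simp; linarith)
  have hsub : closedBall x (r/2) ⊆ closedBall x (2*(α+ε)*r) ∪ Kᶜ := by
    intro y hy
    by_cases hyK : y ∈ K
    · left
      have hyz := key y hyK (mem_closedBall.1 hy)
      have := dist_triangle y z x
      have := dist_comm x z
      exact mem_closedBall.2 (by nlinarith)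
    · exact Or.inr hyK
  have hμle : μ (closedBall x (r/2)) ≤ μ (closedBall x (2*(α+ε)*r)) := by
    calc μ (closedBall x (r/2)) ≤ μ (closedBall x (2*(α+ε)*r) ∪ Kᶜ) := measure_mono hsub
    _ ≤ μ (closedBall x (2*(α+ε)*r)) + μ Kᶜ := measure_union_le _ _
    _ = μ (closedBall x (2*(α+ε)*r)) := by rw [hμK, add_zero]
  have hlow := (hreg x hx (r/2) (by linarith) (by linarith)).1
  have hbig0 : 0 < 2*(α+ε)*r := by nlinarith
  have hup := (hreg x hx (2*(α+ε)*r) hbig0 (by nlinarith)).2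
  have hch : ENNReal.ofReal (C⁻¹ * (r/2)^δ) ≤ ENNReal.ofReal (C * (2*(α+ε)*r)^δ) :=
    hlow.trans (hμle.trans hup)
  have hRHS : 0 ≤ C * (2*(α+ε)*r)^δ := by positivity
  have hle : C⁻¹ * (r/2)^δ ≤ C * (2*(α+ε)*r)^δ := (ENNReal.ofReal_le_ofReal_iff hRHS).1 hch
  have h1 : (2*(α+ε)*r)^δ = (2*(α+ε))^δ * r^δ := Real.mul_rpow (by nlinarith) hr.le
  have h2 : (r/2)^δ = (2:ℝ)⁻¹^δ * r^δ := by
    have : r/2 = 2⁻¹ * r := by ring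
    rw [this, Real.mul_rpow (by norm_num) hr.le]
  have hrδ : 0 < r^δ := Real.rpow_pos_of_pos hr δ
  rw [h1, h2] at hle
  nlinarith [mul_lt_mul_of_pos_right hkey hrδ]


lemma const_lemma (C δ : ℝ) (hC : 0 < C) (hδ : 0 < δ) :
    ∃ α : ℝ, 0 < α ∧ α < 1 ∧ α ≤ 2⁻¹ ∧ ∀ ε : ℝ, 0 ≤ ε → ε ≤ Real.sqrt α →
      2*(α+ε) < 1 ∧ C * (2*(α+ε))^δ < C⁻¹ * (2:ℝ)⁻¹^δ := by
  set T : ℝ := C ^ (-(2/δ)) with hT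
  have hT0 : 0 < T := Real.rpow_pos_of_pos hC _
  set s : ℝ := min (T * 2⁻¹) 1 / 8 with hs
  have hs0 : 0 < s := by
    have : 0 < min (T * 2⁻¹) 1 := lt_min (by positivity) one_pos
    positivity
  have hs8 : s ≤ 8⁻¹ := by
    have : min (T * 2⁻¹) 1 ≤ 1 := min_le_right _ _
    rw [hs]; linarith
  have hsT : s ≤ T * 2⁻¹ / 8 := by
    have : min (T * 2⁻¹) 1 ≤ T * 2⁻¹ := min_le_left _ _
    rw [hs]; linarith
  refine ⟨s^2, by positivity, by nlinarith, by nlinarith, ?_⟩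
  intro ε hε0 hεs
  rw [Real.sqrt_sq hs0.le] at hεs
  have h4s : 2*(s^2+ε) ≤ 4*s := by nlinarith
  constructor
  · nlinarith
  · have hlt : 2*(s^2+ε) < T * 2⁻¹ := by nlinarith
    have h0 : (0:ℝ) ≤ 2*(s^2+ε) := by nlinarith
    have hrp : (2*(s^2+ε))^δ < (T * 2⁻¹)^δ := Real.rpow_lt_rpow h0 hlt hδ
    have hmul : (T * 2⁻¹)^δ = T^δ * (2:ℝ)⁻¹^δ := Real.mul_rpow hT0.le (by norm_num)
    have hTδ : T^δ = (C^2)⁻¹ := by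
      rw [hT, ← Real.rpow_natCast C 2, ← Real.rpow_neg hC.le, ← Real.rpow_mul hC.le]
      norm_num [hδ.ne']
    have h2δ : 0 < (2:ℝ)⁻¹^δ := Real.rpow_pos_of_pos (by norm_num) _
    calc C * (2*(s^2+ε))^δ < C * ((T * 2⁻¹)^δ) := by
          exact mul_lt_mul_of_pos_left hrp hC
    _ = C⁻¹ * (2:ℝ)⁻¹^δ := by
          rw [hmul, hTδ]; field_simp

/-- Broderick–Fishman–Kleinbock–Reich–Weiss: if `S` is absolute
winning on a closed set `Λ` and `K ⊆ Λ` is a closed Ahlfors δ-regular set, then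
`K ∩ S` is winning for Schmidt's game on `K`. -/
theorem winning_on_of_absolute_winning {d : ℕ}
    (Λ : Set (EuclideanSpace ℝ (Fin d))) (hΛ : IsClosed Λ)
    (S : Set (EuclideanSpace ℝ (Fin d))) (hS : S ⊆ Λ)
    (hwin : AbsoluteWinningOn Λ S)
    (δ : ℝ) (hδ : 0 < δ)
    (K : Set (EuclideanSpace ℝ (Fin d))) (hKΛ : K ⊆ Λ) (hK : IsClosed K)
    (hreg : ∃ μ : Measure (EuclideanSpace ℝ (Fin d)), μ Kᶜ = 0 ∧
      ∃ C > (0:ℝ), ∃ r₀ > (0:ℝ), ∀ x ∈ K, ∀ r : ℝ, 0 < r → r < r₀ →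
        ENNReal.ofReal (C⁻¹ * r ^ δ) ≤ μ (closedBall x r) ∧
        μ (closedBall x r) ≤ ENNReal.ofReal (C * r ^ δ)) :
    WinningOn K (K ∩ S) := by
  classical
  obtain ⟨μ, hμK, C, hC, r₀, hr₀, hreg⟩ := hreg
  obtain ⟨α, hα0, hα1, hα2, hαkey⟩ := const_lemma C δ hC hδ
  refine ⟨α, hα0, hα1, ?_⟩
  intro β hβ0 hβ1
  set γ : ℝ := α * β with hγ
  have hγ0 : 0 < γ := mul_pos hα0 hβ0
  have hγ1 : γ < 1 := by rw [hγ]; nlinarith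
  set b : ℝ := Real.sqrt γ with hbdef
  have hb0 : 0 < b := Real.sqrt_pos.2 hγ0
  have hb1 : b < 1 := by
    have h := Real.sqrt_lt_sqrt hγ0.le hγ1
    simpa [hbdef] using h
  have hbb : b * b = γ := Real.mul_self_sqrt hγ0.le
  have hbs : b ≤ Real.sqrt α := Real.sqrt_le_sqrt (by nlinarith)
  obtain ⟨hsmall, hkey⟩ := hαkey b hb0.le hbs
  obtain ⟨σ'', hcaus'', hmove'', hwin''⟩ := hwin b hb0 hb1
  have hex : ∀ r0 : ℝ, ∃ k, γ ^ k * r0 < r₀ := by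
    intro r0
    rcases le_or_gt r0 0 with h | h
    · exact ⟨0, by rw [pow_zero, one_mul]; linarith⟩
    · obtain ⟨k, hk⟩ := exists_pow_lt_of_lt_one (div_pos hr₀ h) hγ1
      exact ⟨k, (lt_div_iff₀ h).1 hk⟩
  set k0 : ℝ → ℕ := fun r0 => Nat.find (hex r0) with hk0
  have hk0spec : ∀ r0, γ ^ (k0 r0) * r0 < r₀ := fun r0 => Nat.find_spec (hex r0)
  set shf : ℕ → (ℕ → GBall d) → (ℕ → GBall d) := fun n B j => B (n + j) with hshf
  set F : GBall d → GBall d → GBall d := fun bl N =>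
    if h : ∃ y, y ∈ K ∧ closedBall y (α * bl.2) ⊆
        closedBall bl.1 bl.2 \ closedBall N.1 N.2
    then (h.choose, α * bl.2) else (bl.1, α * bl.2) with hF
  have hF2 : ∀ bl N, (F bl N).2 = α * bl.2 := by
    intro bl N; simp only [hF]; split <;> rfl
  have hFgood : ∀ bl N,
      (∃ y, y ∈ K ∧ closedBall y (α * bl.2) ⊆
        closedBall bl.1 bl.2 \ closedBall N.1 N.2) →
      (F bl N).1 ∈ K ∧ closedBall (F bl N).1 (F bl N).2 ⊆
        closedBall bl.1 bl.2 \ closedBall N.1 N.2 := by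
    intro bl N h
    simp only [hF]
    rw [dif_pos h]
    exact ⟨h.choose_spec.1, h.choose_spec.2⟩
  set σ : (ℕ → GBall d) → ℕ → GBall d := fun B k =>
    if k0 (B 0).2 ≤ k then F (B k) (σ'' (shf (k0 (B 0).2) B) (k - k0 (B 0).2))
    else ((B k).1, α * (B k).2) with hσ
  have hσge : ∀ B k, k0 (B 0).2 ≤ k →
      σ B k = F (B k) (σ'' (shf (k0 (B 0).2) B) (k - k0 (B 0).2)) := by
    intro B k h; simp only [hσ]; rw [if_pos h]
  have hσlt : ∀ B k, ¬ k0 (B 0).2 ≤ k → σ B k = ((B k).1, α * (B k).2) := by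
    intro B k h; simp only [hσ]; rw [if_neg h]
  have hσ2 : ∀ B k, (σ B k).2 = α * (B k).2 := by
    intro B k
    by_cases h : k0 (B 0).2 ≤ k
    · rw [hσge B k h, hF2]
    · rw [hσlt B k h]
  have hrad : ∀ B k, SchmidtLegal K β σ B k → ∀ i, i ≤ k →
      (B i).2 = γ ^ i * (B 0).2 := by
    intro B k hB i hi
    induction i with
    | zero => simp
    | succ i ih =>
      have hlt : i < k := lt_of_lt_of_le (Nat.lt_succ_self i) hi
      rw [(hB.2.2 i hlt).2.1, hσ2, ih (le_of_lt hlt), pow_succ, hγ]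
      ring
  have hpos : ∀ B k, SchmidtLegal K β σ B k → ∀ i, i ≤ k → 0 < (B i).2 := by
    intro B k hB i hi
    rw [hrad B k hB i hi]
    exact mul_pos (pow_pos hγ0 i) hB.2.1
  have hcen : ∀ B k, SchmidtLegal K β σ B k → ∀ i, i ≤ k → (B i).1 ∈ K := by
    intro B k hB i hi
    cases i with
    | zero => exact hB.1
    | succ i => exact (hB.2.2 i (lt_of_lt_of_le (Nat.lt_succ_self i) hi)).1
  have hlegal_mono : ∀ B k k', k' ≤ k → SchmidtLegal K β σ B k →
      SchmidtLegal K β σ B k' :=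
    fun B k k' h hB => ⟨hB.1, hB.2.1, fun i hi => hB.2.2 i (lt_of_lt_of_le hi h)⟩
  have hrlt : ∀ B k, SchmidtLegal K β σ B k → k0 (B 0).2 ≤ k → (B k).2 < r₀ := by
    intro B k hB hk
    rw [hrad B k hB k le_rfl]
    calc γ ^ k * (B 0).2 ≤ γ ^ (k0 (B 0).2) * (B 0).2 :=
      mul_le_mul_of_nonneg_right (pow_le_pow_of_le_one hγ0.le hγ1.le hk) hB.2.1.le
    _ < r₀ := hk0spec _
  have hstep : ∀ B j, SchmidtLegal K β σ B (k0 (B 0).2 + j) →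
      AbsLegal Λ b σ'' (shf (k0 (B 0).2) B) j →
      (σ B (k0 (B 0).2 + j)).1 ∈ K ∧
        gset (σ B (k0 (B 0).2 + j)) ⊆
          gset (B (k0 (B 0).2 + j)) \ gset (σ'' (shf (k0 (B 0).2) B) j) := by
    intro B j hB habs
    set n := k0 (B 0).2 with hn
    set N := σ'' (shf n B) j with hN
    have hN2 : N.2 = b * (B (n+j)).2 := (hmove'' (shf n B) j habs).2
    have hxK : (B (n+j)).1 ∈ K := hcen B (n+j) hB (n+j) le_rfl
    have hr : 0 < (B (n+j)).2 := hpos B (n+j) hB (n+j) le_rfl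
    have hrr : (B (n+j)).2 < r₀ := hrlt B (n+j) hB (Nat.le_add_right n j)
    have hgood : ∃ y, y ∈ K ∧ closedBall y (α * (B (n+j)).2) ⊆
        closedBall (B (n+j)).1 (B (n+j)).2 \ closedBall N.1 N.2 :=
      geom_lemma K μ hμK C r₀ δ hC hr₀ hδ hreg α b hα0 hα2 hb0.le hsmall hkey
        (B (n+j)).1 hxK (B (n+j)).2 hr hrr N.1 N.2 (le_of_eq hN2)
    have hσeq : σ B (n+j) = F (B (n+j)) N := by
      have h := hσge B (n+j) (Nat.le_add_right n j)
      rwa [Nat.add_sub_cancel_left] at h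
    rw [hσeq]
    exact hFgood (B (n+j)) N hgood
  have hmain : ∀ j (B : ℕ → GBall d), SchmidtLegal K β σ B (k0 (B 0).2 + j) →
      AbsLegal Λ b σ'' (shf (k0 (B 0).2) B) j := by
    intro j
    induction j with
    | zero =>
      intro B hB
      exact ⟨hKΛ (hcen B _ hB _ le_rfl), hpos B _ hB _ le_rfl,
        fun i hi => absurd hi (Nat.not_lt_zero i)⟩
    | succ j ih =>
      intro B hB
      have hBj : SchmidtLegal K β σ B (k0 (B 0).2 + j) :=
        hlegal_mono B _ _ (by omega) hB
      have habsj := ih B hBj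
      have hstepj := hstep B j hBj habsj
      refine ⟨habsj.1, habsj.2.1, ?_⟩
      intro i hi
      rcases Nat.lt_succ_iff_lt_or_eq.1 hi with hi' | rfl
      · exact habsj.2.2 i hi'
      · set n := k0 (B 0).2 with hn
        have hsch := hB.2.2 (n+i) (by omega)
        refine ⟨hKΛ hsch.1, ?_, ?_⟩
        · have h3 := (hmove'' (shf n B) i habsj).2
          show (B (n+(i+1))).2 = b * (σ'' (shf n B) i).2
          rw [h3]
          show (B ((n+i)+1)).2 = b * (b * (B (n+i)).2)
          rw [hsch.2.1, hσ2, ← mul_assoc, ← mul_assoc, hbb, hγ]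
          ring
        · exact hsch.2.2.trans hstepj.2
  refine ⟨σ, ?_, ?_, ?_⟩
  · -- causality
    intro B B' k hag
    have h0 : (B 0).2 = (B' 0).2 := by rw [hag 0 (Nat.zero_le k)]
    have e0 : k0 (B 0).2 = k0 (B' 0).2 := by rw [h0]
    by_cases hk : k0 (B 0).2 ≤ k
    · rw [hσge B k hk, hσge B' k (e0 ▸ hk), hag k le_rfl, ← e0]
      congr 1
      exact hcaus'' (shf (k0 (B 0).2) B) (shf (k0 (B 0).2) B') (k - k0 (B 0).2)
        (fun i hi => hag (k0 (B 0).2 + i) (by omega))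
    · rw [hσlt B k hk, hσlt B' k (by rwa [← e0]), hag k le_rfl]
  · -- legal moves
    intro B k hB
    by_cases hk : k0 (B 0).2 ≤ k
    · have hkj : k0 (B 0).2 + (k - k0 (B 0).2) = k := Nat.add_sub_cancel' hk
      have hB' : SchmidtLegal K β σ B (k0 (B 0).2 + (k - k0 (B 0).2)) := by
        rw [hkj]; exact hB
      have habs := hmain (k - k0 (B 0).2) B hB'
      have hst := hstep B (k - k0 (B 0).2) hB' habs
      rw [hkj] at hst
      exact ⟨hst.1, hσ2 B k, hst.2.trans Set.diff_subset⟩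
    · rw [hσlt B k hk]
      refine ⟨hcen B k hB k le_rfl, rfl, ?_⟩
      have h1 : 0 < (B k).2 := hpos B k hB k le_rfl
      exact closedBall_subset_closedBall (mul_le_of_le_one_left h1.le hα1.le)
  · -- winning
    intro B hB x hx
    set n := k0 (B 0).2 with hn
    have hxS : x ∈ S :=
      hwin'' (shf n B) (fun j => hmain j B (hB (n + j))) x (fun j => hx (n + j))
    refine ⟨?_, hxS⟩
    have hc : ∀ k, (B k).1 ∈ K := fun k => hcen B k (hB k) k le_rfl
    have hd : ∀ k, dist ((B k).1) x ≤ γ ^ k * (B 0).2 := by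
      intro k
      have h1 : dist x ((B k).1) ≤ (B k).2 := mem_closedBall.1 (hx k)
      rw [dist_comm]
      rwa [hrad B k (hB k) k le_rfl] at h1
    have htend : Filter.Tendsto (fun k => (B k).1) Filter.atTop (nhds x) := by
      rw [tendsto_iff_dist_tendsto_zero]
      have h0 : Filter.Tendsto (fun k : ℕ => γ ^ k * (B 0).2) Filter.atTop (nhds 0) := by
        simpa using (tendsto_pow_atTop_nhds_zero_of_lt_one hγ0.le hγ1).mul_const (B 0).2
      exact squeeze_zero (fun k => dist_nonneg) hd h0
    exact hK.mem_of_tendsto htend (Filter.Eventually.of_forall hc)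
end

section
/- Let Λ ⊆ ℝ^d be a closed set, I a countable index set, z : I → Λ a family of points of Λ, and L : I → [1,∞) weights, and suppose there is c₁ > 0 such that |z_i − z_j| > c₁/max(L_i, L_j) whenever z_i ≠ z_j. Then the set Bad := {ξ ∈ Λ : there exists c > 0 such that |ξ − z_i| > c/L_i for all i ∈ I} is absolute winning on Λ. -/
open Metric

open scoped Classical in
noncomputable def amove {d : ℕ} {I : Type*} (z : I → EuclideanSpace ℝ (Fin d))
    (L : I → ℝ) (c₁ β : ℝ) (B : GBall d) : GBall d :=
  if h : ∃ i, dist (z i) B.1 ≤ 2 * B.2 ∧ 4 * B.2 < c₁ / L i then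
    (z h.choose, β * B.2)
  else (B.1, β * B.2)

lemma amove_snd {d : ℕ} {I : Type*} (z : I → EuclideanSpace ℝ (Fin d))
    (L : I → ℝ) (c₁ β : ℝ) (B : GBall d) : (amove z L c₁ β B).2 = β * B.2 := by
  unfold amove; split <;> rfl

lemma amove_fst_mem {d : ℕ} {I : Type*} {z : I → EuclideanSpace ℝ (Fin d)}
    {L : I → ℝ} {c₁ β : ℝ} {Λ : Set (EuclideanSpace ℝ (Fin d))}
    (hz : ∀ i, z i ∈ Λ) {B : GBall d} (hB : B.1 ∈ Λ) :
    (amove z L c₁ β B).1 ∈ Λ := by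
  unfold amove; split
  · exact hz _
  · exact hB

lemma dang_uniq {d : ℕ} {I : Type*} {z : I → EuclideanSpace ℝ (Fin d)}
    {L : I → ℝ} {c₁ : ℝ}
    (hsep : ∀ i j, z i ≠ z j → c₁ / max (L i) (L j) < dist (z i) (z j))
    {B : GBall d} {i j : I}
    (hi : dist (z i) B.1 ≤ 2 * B.2 ∧ 4 * B.2 < c₁ / L i)
    (hj : dist (z j) B.1 ≤ 2 * B.2 ∧ 4 * B.2 < c₁ / L j) : z i = z j := by
  by_contra hne
  have h1 := hsep i j hne
  have hdij : dist (z i) (z j) ≤ 4 * B.2 := by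
    calc dist (z i) (z j) ≤ dist (z i) B.1 + dist (z j) B.1 := by
          rw [dist_comm (z j) B.1]; exact dist_triangle _ _ _
      _ ≤ 4 * B.2 := by linarith [hi.1, hj.1]
  rcases max_choice (L i) (L j) with h | h <;> rw [h] at h1 <;>
    linarith [hi.2, hj.2]

lemma amove_fst_eq {d : ℕ} {I : Type*} {z : I → EuclideanSpace ℝ (Fin d)}
    {L : I → ℝ} {c₁ β : ℝ}
    (hsep : ∀ i j, z i ≠ z j → c₁ / max (L i) (L j) < dist (z i) (z j))
    {B : GBall d} {i : I}
    (hi : dist (z i) B.1 ≤ 2 * B.2 ∧ 4 * B.2 < c₁ / L i) :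
    (amove z L c₁ β B).1 = z i := by
  unfold amove
  rw [dif_pos ⟨i, hi⟩]
  exact dang_uniq hsep (Exists.choose_spec (⟨i, hi⟩ :
    ∃ i, dist (z i) B.1 ≤ 2 * B.2 ∧ 4 * B.2 < c₁ / L i)) hi

/-- after Mayeda–Merrill: for a separated family of points of a
closed set `Λ`, the set of badly approximable points is absolute winning on `Λ`. -/
theorem bad_absolute_winning {d : ℕ} {I : Type*} [Countable I]
    (Λ : Set (EuclideanSpace ℝ (Fin d))) (hΛ : IsClosed Λ)
    (z : I → EuclideanSpace ℝ (Fin d)) (hz : ∀ i, z i ∈ Λ)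
    (L : I → ℝ) (hL : ∀ i, 1 ≤ L i)
    (c₁ : ℝ) (hc₁ : 0 < c₁)
    (hsep : ∀ i j, z i ≠ z j → c₁ / max (L i) (L j) < dist (z i) (z j)) :
    AbsoluteWinningOn Λ {ξ ∈ Λ | ∃ c > (0:ℝ), ∀ i : I, c / L i < dist ξ (z i)} := by
  classical
  intro β hβ0 hβ1
  refine ⟨fun B k => amove z L c₁ β (B k), ?_, ?_, ?_⟩
  · -- causal
    intro B B' k h
    simp only [h k le_rfl]
  · -- legal responses
    intro B k hleg
    refine ⟨amove_fst_mem hz ?_, amove_snd z L c₁ β (B k)⟩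
    cases k with
    | zero => exact hleg.1
    | succ n => exact (hleg.2.2 n (lt_add_one n)).1
  · -- outcome lies in Bad
    intro B hlegal x hx
    set σ : (ℕ → GBall d) → ℕ → GBall d := fun B k => amove z L c₁ β (B k) with hσ
    have hr0 : 0 < (B 0).2 := (hlegal 0).2.1
    have hrec : ∀ k, (B (k + 1)).2 = β ^ 2 * (B k).2 := by
      intro k
      have h := ((hlegal (k + 1)).2.2 k (lt_add_one k)).2.1
      rw [h]
      show β * (amove z L c₁ β (B k)).2 = β ^ 2 * (B k).2
      rw [amove_snd]; ring
    have hrk : ∀ k, (B k).2 = (β ^ 2) ^ k * (B 0).2 := by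
      intro k
      induction k with
      | zero => simp
      | succ n ih => rw [hrec n, ih]; ring
    have hrpos : ∀ k, 0 < (B k).2 := by
      intro k; rw [hrk k]; positivity
    have hxd : ∀ k, dist x (B k).1 ≤ (B k).2 := fun k => mem_closedBall.mp (hx k)
    have hcent : ∀ k, (B k).1 ∈ Λ := by
      intro k
      cases k with
      | zero => exact (hlegal 0).1
      | succ n => exact ((hlegal (n + 1)).2.2 n (lt_add_one n)).1
    have hβ2 : Filter.Tendsto (fun k : ℕ => (β ^ 2) ^ k) Filter.atTop (nhds 0) :=
      tendsto_pow_atTop_nhds_zero_of_lt_one (by positivity) (by nlinarith)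
    have hrt : Filter.Tendsto (fun k => (B k).2) Filter.atTop (nhds 0) := by
      have := hβ2.mul_const (B 0).2
      rw [zero_mul] at this
      refine this.congr fun k => ?_
      rw [hrk k]
    have hxΛ : x ∈ Λ := by
      have htend : Filter.Tendsto (fun k => (B k).1) Filter.atTop (nhds x) := by
        rw [tendsto_iff_dist_tendsto_zero]
        refine squeeze_zero (fun k => dist_nonneg) (fun k => ?_) hrt
        rw [dist_comm]; exact hxd k
      exact hΛ.mem_of_tendsto htend (Filter.Eventually.of_forall hcent)
    refine ⟨hxΛ, min (β ^ 3 * c₁ / 4) (β * (B 0).2), by positivity, ?_⟩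
    intro i
    have hLi : (0:ℝ) < L i := lt_of_lt_of_le one_pos (hL i)
    set ρ := c₁ / L i with hρdef
    have hρ : 0 < ρ := by positivity
    have hex : ∃ k, 4 * (B k).2 < ρ := by
      obtain ⟨k, hk⟩ := (hrt.eventually (gt_mem_nhds (show (0:ℝ) < ρ / 4 by positivity))).exists
      exact ⟨k, by linarith⟩
    set k := Nat.find hex with hkdef
    have hk : 4 * (B k).2 < ρ := Nat.find_spec hex
    -- in both cases, dist x (z i) > β * (B k).2
    have hmain : β * (B k).2 < dist x (z i) := by
      by_cases hnear : dist (z i) (B k).1 ≤ 2 * (B k).2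
      · -- dangerous: Ayesha deleted a ball centered at z i
        have hdang : dist (z i) (B k).1 ≤ 2 * (B k).2 ∧ 4 * (B k).2 < c₁ / L i :=
          ⟨hnear, hk⟩
        have hsub := ((hlegal (k + 1)).2.2 k (lt_add_one k)).2.2
        have hxk1 := hx (k + 1)
        have hxnot : x ∉ gset (σ B k) := (hsub hxk1).2
        have : x ∉ closedBall (z i) (β * (B k).2) := by
          intro hmem
          apply hxnot
          show x ∈ closedBall (amove z L c₁ β (B k)).1 (amove z L c₁ β (B k)).2
          rw [amove_fst_eq hsep hdang, amove_snd]
          exact hmem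
        have := mt mem_closedBall.mpr this
        push_neg at this
        linarith [this]
      · -- far: distance bound directly
        push_neg at hnear
        have h1 : dist (z i) (B k).1 ≤ dist (z i) x + dist x (B k).1 := dist_triangle _ _ _
        have h2 : dist (z i) x = dist x (z i) := dist_comm _ _
        have h3 := hxd k
        have hβk : β * (B k).2 < (B k).2 := by
          have := hrpos k; nlinarith
        nlinarith
    -- now bound β * (B k).2 from below
    have hlow : min (β ^ 3 * c₁ / 4) (β * (B 0).2) / L i ≤ β * (B k).2 := by
      rcases Nat.eq_zero_or_pos k with h0 | hpos
      · rw [h0]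
        calc min (β ^ 3 * c₁ / 4) (β * (B 0).2) / L i
            ≤ min (β ^ 3 * c₁ / 4) (β * (B 0).2) := by
              apply div_le_self (le_min (by positivity) (by positivity)) (hL i)
          _ ≤ β * (B 0).2 := min_le_right _ _
      · obtain ⟨m, hmk⟩ : ∃ m, k = m + 1 := ⟨k - 1, by omega⟩
        have hmlt : m < Nat.find hex := by rw [← hkdef]; omega
        have hm : ¬ 4 * (B m).2 < ρ := Nat.find_min hex hmlt
        push_neg at hm
        have hr1 : (B (m + 1)).2 = β ^ 2 * (B m).2 := hrec m
        have h4 : ρ ≤ 4 * (B m).2 := hm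
        have hkey : β ^ 3 * ρ / 4 ≤ β * (B (m + 1)).2 := by
          rw [hr1]
          nlinarith [hrpos m, pow_pos hβ0 3,
            mul_le_mul_of_nonneg_left h4 (le_of_lt (pow_pos hβ0 3))]
        rw [hmk]
        calc min (β ^ 3 * c₁ / 4) (β * (B 0).2) / L i
            ≤ (β ^ 3 * c₁ / 4) / L i := by
              gcongr
              exact min_le_left _ _
          _ = β ^ 3 * ρ / 4 := by rw [hρdef]; ring
          _ ≤ β * (B (m + 1)).2 := hkey
    exact lt_of_le_of_lt hlow hmain
end
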